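/- arXiv:gr-qc/0510052 — 4 statements merged into one kernel-verified Lean document; each statement's English description precedes it below -/
import Mathlib

section
/- Let n and m be nonempty finite types, let C and D be finite types, and let {E_c}_{c∈C} and {F_d}_{d∈D} be families of m×n matrices over ℂ. If Σ_{c∈C} E_c ρ E_c† = Σ_{d∈D} F_d ρ F_d† for every ρ ∈ Matrix n n ℂ (i.e., the two families implement the same completely positive map), then there exists a scalar matrix u : C → D → ℂ such that E_c = Σ_{d∈D} u(c,d) • F_d for all c ∈ C. -/
open Matrix BigOperators

lemma euclid_sum_apply {ι : Type*} {D : Type*} (f : D → EuclideanSpace ℂ ι) (s : Finset D) (k : ι) :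
    (∑ d ∈ s, f d) k = ∑ d ∈ s, f d k := by
  classical
  induction s using Finset.induction with
  | empty => rfl
  | insert _ _ h ih => rw [Finset.sum_insert h, Finset.sum_insert h, PiLp.add_apply, ih]

lemma inner_expand {ι γ : Type*} [Fintype ι] [Fintype γ]
    (z : EuclideanSpace ℂ ι) (x : γ → EuclideanSpace ℂ ι) :
    ∑ g, (inner ℂ (x g) z : ℂ) * star (inner ℂ (x g) z : ℂ)
      = ∑ k, ∑ l, z k * star (z l) * ∑ g, star (x g k) * x g l := by
  have point : ∀ g, (inner ℂ (x g) z : ℂ) * star (inner ℂ (x g) z : ℂ)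
      = ∑ k, ∑ l, z k * star (z l) * (star (x g k) * x g l) := by
    intro g
    simp only [PiLp.inner_apply, RCLike.inner_apply, starRingEnd_apply, star_sum,
      StarMul.star_mul, star_star, Finset.sum_mul_sum]
    refine Finset.sum_congr rfl fun k _ => Finset.sum_congr rfl fun l _ => by ring
  rw [Finset.sum_congr rfl fun g _ => point g, Finset.sum_comm]
  refine Finset.sum_congr rfl fun k _ => ?_
  rw [Finset.sum_comm]
  refine Finset.sum_congr rfl fun l _ => ?_
  rw [← Finset.mul_sum]

lemma aux_span {ι C D : Type*} [Fintype ι] [Fintype C] [Fintype D]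
    (v : C → EuclideanSpace ℂ ι) (w : D → EuclideanSpace ℂ ι)
    (h : ∀ k l : ι, ∑ c, star (v c k) * v c l = ∑ d, star (w d k) * w d l) :
    ∀ c, v c ∈ Submodule.span ℂ (Set.range w) := by
  intro c0
  set K := Submodule.span ℂ (Set.range w) with hK
  rw [← Submodule.orthogonal_orthogonal K, Submodule.mem_orthogonal]
  intro z hz
  have hwz : ∀ d, (inner ℂ (w d) z : ℂ) = 0 := fun d =>
    (Submodule.mem_orthogonal K z).mp hz (w d) (Submodule.subset_span ⟨d, rfl⟩)
  have rhs0 : ∑ d, (inner ℂ (w d) z : ℂ) * star (inner ℂ (w d) z : ℂ) = 0 :=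
    Finset.sum_eq_zero fun d _ => by rw [hwz d, zero_mul]
  have key : ∑ c, (inner ℂ (v c) z : ℂ) * star (inner ℂ (v c) z : ℂ) = 0 := by
    rw [inner_expand z v, ← rhs0, inner_expand z w]
    exact Finset.sum_congr rfl fun k _ => Finset.sum_congr rfl fun l _ => by rw [h k l]
  have key2 : ∑ c, (Complex.normSq (inner ℂ (v c) z : ℂ) : ℂ) = 0 := by
    rw [← key]
    exact Finset.sum_congr rfl fun c _ => (Complex.mul_conj _).symm
  have key3 : ∑ c, Complex.normSq (inner ℂ (v c) z : ℂ) = 0 := by exact_mod_cast key2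
  have := (Finset.sum_eq_zero_iff_of_nonneg (fun c _ => Complex.normSq_nonneg _)).mp key3 c0
    (Finset.mem_univ _)
  exact (inner_eq_zero_symm).mp (Complex.normSq_eq_zero.mp this)

/-- If two families of Kraus operators `{E c}` and `{F d}`
implement the same completely positive map, then there is a scalar matrix
`u` such that `E c = ∑ d, u c d • F d` for all `c`. -/
theorem kraus_families_related_by_scalar_matrix
    {n m C D : Type*} [Fintype n] [Fintype m] [Fintype C] [Fintype D]
    [DecidableEq n] [DecidableEq m] [Nonempty n] [Nonempty m]
    (E : C → Matrix m n ℂ) (F : D → Matrix m n ℂ)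
    (h : ∀ ρ : Matrix n n ℂ,
      ∑ c, E c * ρ * (E c)ᴴ = ∑ d, F d * ρ * (F d)ᴴ) :
    ∃ u : C → D → ℂ, ∀ c, E c = ∑ d, u c d • F d := by
  have hent : ∀ (i j : n) (a b : m),
      ∑ c, E c a i * star (E c b j) = ∑ d, F d a i * star (F d b j) := by
    intro i j a b
    have := congrFun (congrFun (h (single i j 1)) a) b
    simpa only [Matrix.sum_apply, Matrix.mul_apply, Matrix.single,
      conjTranspose_apply, Finset.sum_mul, ite_mul, Matrix.of_apply, ite_and, zero_mul,
      mul_ite, mul_zero, mul_one, Finset.sum_ite_eq, Finset.mem_univ, if_true, one_mul] using this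
  set v : C → EuclideanSpace ℂ (m × n) := fun c => WithLp.toLp 2 (fun p : m × n => E c p.1 p.2) with hv
  set w : D → EuclideanSpace ℂ (m × n) := fun d => WithLp.toLp 2 (fun p : m × n => F d p.1 p.2) with hw
  have hspan : ∀ c, v c ∈ Submodule.span ℂ (Set.range w) := by
    refine aux_span v w fun k l => ?_
    have := hent l.2 k.2 l.1 k.1
    calc ∑ c, star (v c k) * v c l = ∑ c, E c l.1 l.2 * star (E c k.1 k.2) :=
          Finset.sum_congr rfl fun c _ => mul_comm _ _
      _ = ∑ d, F d l.1 l.2 * star (F d k.1 k.2) := this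
      _ = ∑ d, star (w d k) * w d l := Finset.sum_congr rfl fun d _ => mul_comm _ _
  have hrep : ∀ c, ∃ u : D → ℂ, ∑ d, u d • w d = v c := fun c =>
    (Submodule.mem_span_range_iff_exists_fun ℂ).mp (hspan c)
  choose u hu using hrep
  refine ⟨u, fun c => ?_⟩
  ext a i
  have := congrFun (congrArg WithLp.ofLp (hu c)) (a, i)
  rw [euclid_sum_apply] at this
  simp only [PiLp.smul_apply, smul_eq_mul] at this
  rw [Matrix.sum_apply]
  simp only [Matrix.smul_apply, smul_eq_mul]
  exact this.symm
end

section
/- Let Φ be a quantum channel on I = (a × b) ⊕ k and let U ∈ Matrix b b ℂ be unitary. Then B is U-invariant under Φ if and only if for every σ^B ∈ Matrix b b ℂ there exists τ^A ∈ Matrix a a ℂ such that Φ(emb(1^A, σ^B)) = emb(τ^A, U σ^B U†). (That is, it suffices to verify the invariance condition with the identity on the A factor.) -/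
open Matrix Kronecker BigOperators

section

variable {a b k : Type*} [Fintype a] [Fintype b] [Fintype k]
  [DecidableEq a] [DecidableEq b] [DecidableEq k]

/-- The embedding of `σA ⊗ σB` into the `(a × b) ⊕ k`-indexed matrices:
the entry at `((x,i),(y,j))` (both in the `a × b` summand) is
`σA x y * σB i j`, and all other entries vanish. -/
lemma aux_row_zero {n m C : Type*} [Fintype n] [Fintype m] [Fintype C]
    (M : C → Matrix n m ℂ) (r : n) (h : (∑ c, M c * (M c)ᴴ) r r = 0) :
    ∀ c t, M c r t = 0 := by
  have h1 : (∑ c, ∑ t, Complex.normSq (M c r t) : ℝ) = 0 := by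
    have h2 : ((∑ c, ∑ t, Complex.normSq (M c r t) : ℝ) : ℂ) = 0 := by
      rw [← h]
      push_cast
      rw [Matrix.sum_apply]
      refine Finset.sum_congr rfl fun c _ => ?_
      rw [Matrix.mul_apply]
      refine Finset.sum_congr rfl fun t _ => ?_
      rw [Matrix.conjTranspose_apply, Complex.star_def, Complex.mul_conj]
    exact_mod_cast h2
  intro c t
  have := (Finset.sum_eq_zero_iff_of_nonneg (fun c _ => Finset.sum_nonneg fun t _ => Complex.normSq_nonneg _)).mp h1 c (Finset.mem_univ c)
  have := (Finset.sum_eq_zero_iff_of_nonneg (fun t _ => Complex.normSq_nonneg _)).mp this t (Finset.mem_univ t)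
  exact Complex.normSq_eq_zero.mp this

lemma aux_all_zero {n m C : Type*} [Fintype n] [Fintype m] [Fintype C]
    (M : C → Matrix n m ℂ) (h : ∑ c, M c * (M c)ᴴ = 0) : ∀ c, M c = 0 := by
  intro c
  ext r t
  exact aux_row_zero M r (by rw [h]; rfl) c t

lemma aux_sum_fromBlocks {n m C : Type*} [Fintype C]
    (f : C → Matrix n n ℂ) (g : C → Matrix n m ℂ) (h : C → Matrix m n ℂ) (i : C → Matrix m m ℂ) :
    ∑ c, Matrix.fromBlocks (f c) (g c) (h c) (i c)
      = Matrix.fromBlocks (∑ c, f c) (∑ c, g c) (∑ c, h c) (∑ c, i c) := by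
  ext (x | x) (y | y) <;> simp [Matrix.sum_apply]

lemma aux_kronecker_sum {n m p q C : Type*} [Fintype C]
    (M : Matrix n m ℂ) (f : C → Matrix p q ℂ) :
    M ⊗ₖ (∑ c, f c) = ∑ c, M ⊗ₖ f c := by
  ext ⟨x, i⟩ ⟨y, j⟩
  simp [Matrix.sum_apply, Finset.mul_sum]

lemma aux_sum_kronecker {n m p q C : Type*} [Fintype C]
    (f : C → Matrix n m ℂ) (M : Matrix p q ℂ) :
    (∑ c, f c) ⊗ₖ M = ∑ c, f c ⊗ₖ M := by
  ext ⟨x, i⟩ ⟨y, j⟩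
  simp [Matrix.sum_apply, Finset.sum_mul]

lemma aux_one_eq_sum {n : Type*} [Fintype n] [DecidableEq n] :
    (1 : Matrix n n ℂ) = ∑ i, Matrix.single i i (1:ℂ) := by
  ext x y
  by_cases hxy : x = y
  · subst hxy
    simp [Matrix.sum_apply, Matrix.single, Matrix.one_apply]
  · rw [Matrix.one_apply_ne hxy]
    symm
    rw [Matrix.sum_apply]
    apply Finset.sum_eq_zero
    intro i _
    exact Matrix.single_apply_of_ne _ _ _ _ _ fun h => hxy (h.1.symm.trans h.2)

lemma aux_kronecker_conjTranspose {n m p q : Type*}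
    (M : Matrix n m ℂ) (N : Matrix p q ℂ) : (M ⊗ₖ N)ᴴ = Mᴴ ⊗ₖ Nᴴ := by
  ext ⟨x, i⟩ ⟨y, j⟩
  simp [Matrix.conjTranspose_apply, star_mul']

noncomputable def emb (σA : Matrix a a ℂ) (σB : Matrix b b ℂ) :
    Matrix ((a × b) ⊕ k) ((a × b) ⊕ k) ℂ :=
  Matrix.fromBlocks (σA ⊗ₖ σB) 0 0 0

/-- For a quantum channel `Φ` on `I = (a × b) ⊕ k` and a
unitary `U` on `b`, subsystem `B` is `U`-invariant under `Φ` iff the defining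
condition holds with the identity on the `A` factor. -/
theorem U_invariant_iff_identity_on_A
    {C : Type*} [Fintype C] [Nonempty a] [Nonempty b] [Nonempty k]
    (Φ : Matrix ((a × b) ⊕ k) ((a × b) ⊕ k) ℂ →
         Matrix ((a × b) ⊕ k) ((a × b) ⊕ k) ℂ)
    (E : C → Matrix ((a × b) ⊕ k) ((a × b) ⊕ k) ℂ)
    (hΦ : ∀ ρ, Φ ρ = ∑ c, E c * ρ * (E c)ᴴ)
    (hE : ∑ c, (E c)ᴴ * E c = 1)
    (U : Matrix b b ℂ) (hU : U ∈ Matrix.unitaryGroup b ℂ) :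
    (∀ (σA : Matrix a a ℂ) (σB : Matrix b b ℂ),
        ∃ τA : Matrix a a ℂ, Φ (emb σA σB) = emb τA (U * σB * Uᴴ)) ↔
    (∀ σB : Matrix b b ℂ,
        ∃ τA : Matrix a a ℂ, Φ (emb 1 σB) = emb τA (U * σB * Uᴴ)) := by
  constructor
  · intro h σB
    exact h 1 σB
  intro h σA σB
  -- unitarity of U
  have hU1 : Uᴴ * U = 1 := (Matrix.mem_unitaryGroup_iff'.mp hU : _)
  have hU2 : U * Uᴴ = 1 := (Matrix.mem_unitaryGroup_iff.mp hU : _)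
  -- blocks of the Kraus operators
  set A : C → Matrix (a × b) (a × b) ℂ := fun c => (E c).toBlocks₁₁ with hA
  set B : C → Matrix (a × b) k ℂ := fun c => (E c).toBlocks₁₂ with hB
  set G : C → Matrix k (a × b) ℂ := fun c => (E c).toBlocks₂₁ with hG
  set D : C → Matrix k k ℂ := fun c => (E c).toBlocks₂₂ with hD
  have hEc : ∀ c, E c = Matrix.fromBlocks (A c) (B c) (G c) (D c) :=
    fun c => (Matrix.fromBlocks_toBlocks (E c)).symm
  -- Φ on embedded matrices, in block form
  have key : ∀ σ : Matrix (a × b) (a × b) ℂ,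
      Φ (Matrix.fromBlocks σ 0 0 0) =
        Matrix.fromBlocks (∑ c, A c * σ * (A c)ᴴ) (∑ c, A c * σ * (G c)ᴴ)
          (∑ c, G c * σ * (A c)ᴴ) (∑ c, G c * σ * (G c)ᴴ) := by
    intro σ
    rw [hΦ, ← aux_sum_fromBlocks]
    refine Finset.sum_congr rfl fun c _ => ?_
    rw [hEc c, Matrix.fromBlocks_conjTranspose, Matrix.fromBlocks_multiply,
      Matrix.fromBlocks_multiply]
    simp [Matrix.mul_assoc]
  -- block identities from the hypothesis
  have hblocks : ∀ σ : Matrix b b ℂ, ∃ τ : Matrix a a ℂ,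
      (∑ c, A c * ((1 : Matrix a a ℂ) ⊗ₖ σ) * (A c)ᴴ = τ ⊗ₖ (U * σ * Uᴴ)) ∧
      (∑ c, G c * ((1 : Matrix a a ℂ) ⊗ₖ σ) * (G c)ᴴ = 0) := by
    intro σ
    obtain ⟨τ, hτ⟩ := h σ
    rw [emb, emb, key, Matrix.fromBlocks_inj] at hτ
    exact ⟨τ, hτ.1, hτ.2.2.2⟩
  -- the 2,1 blocks vanish
  have hGzero : ∀ c, G c = 0 := by
    obtain ⟨τ, _, h0⟩ := hblocks 1
    refine aux_all_zero G ?_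
    simpa [Matrix.one_kronecker_one, Matrix.mul_one] using h0
  -- conjugate the Kraus 1,1-blocks by 1 ⊗ U
  set F : C → Matrix (a × b) (a × b) ℂ :=
    fun c => ((1 : Matrix a a ℂ) ⊗ₖ Uᴴ) * A c with hF
  have hAF : ∀ c, A c = ((1 : Matrix a a ℂ) ⊗ₖ U) * F c := by
    intro c
    rw [hF, ← Matrix.mul_assoc, ← Matrix.mul_kronecker_mul, hU2, Matrix.mul_one,
      Matrix.one_kronecker_one, Matrix.one_mul]
  have hTopF : ∀ σ : Matrix b b ℂ, ∃ τ : Matrix a a ℂ,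
      ∑ c, F c * ((1 : Matrix a a ℂ) ⊗ₖ σ) * (F c)ᴴ = τ ⊗ₖ σ := by
    intro σ
    obtain ⟨τ, hτ, -⟩ := hblocks σ
    refine ⟨τ, ?_⟩
    have : ∑ c, F c * ((1 : Matrix a a ℂ) ⊗ₖ σ) * (F c)ᴴ
        = ((1 : Matrix a a ℂ) ⊗ₖ Uᴴ) *
          (∑ c, A c * ((1 : Matrix a a ℂ) ⊗ₖ σ) * (A c)ᴴ) *
          ((1 : Matrix a a ℂ) ⊗ₖ U) := by
      rw [Finset.mul_sum, Finset.sum_mul]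
      refine Finset.sum_congr rfl fun c _ => ?_
      rw [hF]
      simp only [Matrix.conjTranspose_mul, aux_kronecker_conjTranspose,
        Matrix.conjTranspose_one, Matrix.conjTranspose_conjTranspose]
      noncomm_ring [Matrix.mul_assoc]
    rw [this, hτ, ← Matrix.mul_kronecker_mul, ← Matrix.mul_kronecker_mul,
      Matrix.one_mul, Matrix.mul_one]
    rw [show Uᴴ * (U * σ * Uᴴ) * U = (Uᴴ * U) * σ * (Uᴴ * U) by noncomm_ring,
      hU1, Matrix.one_mul, Matrix.mul_one]
  -- Step A: the conjugated blocks are block-diagonal in the B indices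
  have hOff : ∀ c (x y : a) (i j : b), i ≠ j → F c (x, i) (y, j) = 0 := by
    intro c x y i j hij
    set P : Matrix b b ℂ := Matrix.single j j 1 with hP
    obtain ⟨τ, hτ⟩ := hTopF P
    have hPP : ((1 : Matrix a a ℂ) ⊗ₖ P) * ((1 : Matrix a a ℂ) ⊗ₖ P)
        = (1 : Matrix a a ℂ) ⊗ₖ P := by
      rw [← Matrix.mul_kronecker_mul, Matrix.one_mul, hP,
        Matrix.single_mul_single_same, one_mul]
    have hPstar : Pᴴ = P := by
      ext u v
      rw [Matrix.conjTranspose_apply, hP]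
      simp only [Matrix.single, Matrix.of_apply, and_comm]
      split <;> simp
    have hPH : ((1 : Matrix a a ℂ) ⊗ₖ P)ᴴ = (1 : Matrix a a ℂ) ⊗ₖ P := by
      rw [aux_kronecker_conjTranspose, Matrix.conjTranspose_one, hPstar]
    have hτ' : ∑ c, (F c * ((1 : Matrix a a ℂ) ⊗ₖ P)) *
        (F c * ((1 : Matrix a a ℂ) ⊗ₖ P))ᴴ = τ ⊗ₖ P := by
      rw [← hτ]
      refine Finset.sum_congr rfl fun c _ => ?_
      rw [Matrix.conjTranspose_mul, hPH, Matrix.mul_assoc (F c),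
        ← Matrix.mul_assoc ((1 : Matrix a a ℂ) ⊗ₖ P), hPP, ← Matrix.mul_assoc]
    have hdiag : (∑ c, (F c * ((1 : Matrix a a ℂ) ⊗ₖ P)) *
        (F c * ((1 : Matrix a a ℂ) ⊗ₖ P))ᴴ) (x, i) (x, i) = 0 := by
      rw [hτ']
      show τ x x * P i i = 0
      have hPii : P i i = 0 := by
        rw [hP]
        exact Matrix.single_apply_of_ne _ _ _ _ _ fun hh => hij hh.1.symm
      rw [hPii, mul_zero]
    have h0 := aux_row_zero _ _ hdiag c (y, j)
    rw [Matrix.mul_apply] at h0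
    have hsum : ∑ u, F c (x, i) u * ((1 : Matrix a a ℂ) ⊗ₖ P) u (y, j)
        = F c (x, i) (y, j) := by
      rw [Finset.sum_eq_single (y, j)]
      · show F c (x, i) (y, j) * ((1 : Matrix a a ℂ) y y * P j j) = _
        simp [hP, Matrix.one_apply]
      · rintro ⟨z, p⟩ - hne
        show F c (x, i) (z, p) * ((1 : Matrix a a ℂ) z y * P p j) = 0
        by_cases hz : z = y
        · have hp : p ≠ j := fun hpj => hne (by rw [hz, hpj])
          simp [hP, Ne.symm hp]
        · simp [Matrix.one_apply, hz]
      · simp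
    exact hsum.symm.trans h0
  -- the diagonal B-blocks of the conjugated Kraus operators
  set Gm : C → b → Matrix a a ℂ := fun c i => Matrix.of fun x y => F c (x, i) (y, i) with hGm
  have hFdec : ∀ c, F c = ∑ i, (Gm c i) ⊗ₖ Matrix.single i i (1:ℂ) := by
    intro c
    ext ⟨x, i⟩ ⟨y, j⟩
    rw [Matrix.sum_apply]
    by_cases hij : i = j
    · subst hij
      symm
      rw [Finset.sum_eq_single i]
      · show Gm c i x y * Matrix.single i i (1:ℂ) i i = _
        simp [hGm]
      · intro p _ hpi
        show Gm c p x y * Matrix.single p p (1:ℂ) i i = 0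
        rw [Matrix.single_apply_of_ne _ _ _ _ _ fun hh => hpi hh.1, mul_zero]
      · intro hi; exact absurd (Finset.mem_univ i) hi
    · rw [hOff c x y i j hij]
      symm
      apply Finset.sum_eq_zero
      intro p _
      show Gm c p x y * Matrix.single p p (1:ℂ) i j = 0
      rw [Matrix.single_apply_of_ne _ _ _ _ _
        fun hh => hij (hh.1.symm.trans hh.2), mul_zero]
  have hstdH : ∀ i : b, (Matrix.single i i (1:ℂ))ᴴ = Matrix.single i i 1 := by
    intro i
    ext u v
    rw [Matrix.conjTranspose_apply]
    simp only [Matrix.single, Matrix.of_apply, and_comm]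
    split <;> simp
  have hstep : ∀ c (σ : Matrix b b ℂ),
      F c * ((1 : Matrix a a ℂ) ⊗ₖ σ) * (F c)ᴴ
        = ∑ i, ∑ j, (Gm c i * (Gm c j)ᴴ) ⊗ₖ
            (Matrix.single i i (1:ℂ) * σ * Matrix.single j j (1:ℂ)) := by
    intro c σ
    have hFH : (F c)ᴴ = ∑ j, (Gm c j)ᴴ ⊗ₖ Matrix.single j j (1:ℂ) := by
      rw [hFdec c, Matrix.conjTranspose_sum]
      exact Finset.sum_congr rfl fun j _ => by
        rw [aux_kronecker_conjTranspose, hstdH]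
    rw [hFH]
    nth_rewrite 1 [hFdec c]
    rw [Finset.sum_mul]
    rw [Finset.sum_mul]
    refine Finset.sum_congr rfl fun i _ => ?_
    rw [Finset.mul_sum]
    refine Finset.sum_congr rfl fun j _ => ?_
    rw [← Matrix.mul_kronecker_mul, ← Matrix.mul_kronecker_mul, Matrix.mul_one]
  -- extracting the coefficient equations
  have hextract : ∀ (σ : Matrix b b ℂ) (τ : Matrix a a ℂ),
      (∑ c, F c * ((1 : Matrix a a ℂ) ⊗ₖ σ) * (F c)ᴴ = τ ⊗ₖ σ) →
      ∀ (i j : b) (x y : a),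
        (∑ c, (Gm c i * (Gm c j)ᴴ) x y) * σ i j = τ x y * σ i j := by
    intro σ τ hτ i j x y
    have h2 : ∑ c, (∑ p, ∑ q, (Gm c p * (Gm c q)ᴴ) ⊗ₖ
        (Matrix.single p p (1:ℂ) * σ * Matrix.single q q (1:ℂ)))
        = τ ⊗ₖ σ := by
      rw [← hτ]
      exact Finset.sum_congr rfl fun c _ => (hstep c σ).symm
    have h3 := congrFun (congrFun h2 (x, i)) (y, j)
    simp only [Matrix.sum_apply] at h3
    have hc : ∀ c : C, ∑ p, ∑ q, ((Gm c p * (Gm c q)ᴴ) ⊗ₖ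
        (Matrix.single p p (1:ℂ) * σ * Matrix.single q q (1:ℂ))) (x, i) (y, j)
        = (Gm c i * (Gm c j)ᴴ) x y * σ i j := by
      intro c
      rw [Finset.sum_eq_single i]
      · rw [Finset.sum_eq_single j]
        · show (Gm c i * (Gm c j)ᴴ) x y *
            (Matrix.single i i (1:ℂ) * σ * Matrix.single j j (1:ℂ)) i j = _
          rw [Matrix.mul_single_apply_same,
            Matrix.single_mul_apply_same, one_mul, mul_one]
        · intro q _ hq
          show (Gm c i * (Gm c q)ᴴ) x y *
            (Matrix.single i i (1:ℂ) * σ * Matrix.single q q (1:ℂ)) i j = 0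
          rw [Matrix.mul_single_apply_of_ne _ _ _ _ _ (Ne.symm hq), mul_zero]
        · intro hj; exact absurd (Finset.mem_univ j) hj
      · intro p _ hp
        apply Finset.sum_eq_zero
        intro q _
        show (Gm c p * (Gm c q)ᴴ) x y *
          (Matrix.single p p (1:ℂ) * σ * Matrix.single q q (1:ℂ)) i j = 0
        rw [Matrix.mul_assoc, Matrix.single_mul_apply_of_ne _ _ _ _ _ (Ne.symm hp),
          mul_zero]
      · intro hi; exact absurd (Finset.mem_univ i) hi
    rw [Finset.sum_congr rfl fun c _ => hc c] at h3
    rw [← Finset.sum_mul] at h3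
    exact h3.trans (by show (τ ⊗ₖ σ) (x, i) (y, j) = _; rfl)
  -- the diagonal blocks all agree
  have hGeq : ∀ c (i j : b), Gm c i = Gm c j := by
    intro c0 i j
    by_cases hij : i = j
    · rw [hij]
    set σ0 : Matrix b b ℂ := Matrix.single i i 1 + Matrix.single i j 1 +
      Matrix.single j i 1 + Matrix.single j j 1 with hσ0
    obtain ⟨τ, hτ⟩ := hTopF σ0
    have e1 : σ0 i i = 1 := by
      simp [hσ0, Matrix.add_apply, hij, Ne.symm hij]
    have e2 : σ0 i j = 1 := by
      simp [hσ0, Matrix.add_apply, hij, Ne.symm hij]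
    have e3 : σ0 j i = 1 := by
      simp [hσ0, Matrix.add_apply, hij, Ne.symm hij]
    have e4 : σ0 j j = 1 := by
      simp [hσ0, Matrix.add_apply, hij, Ne.symm hij]
    have S : ∀ l m : b, σ0 l m = 1 → ∑ c, Gm c l * (Gm c m)ᴴ = τ := by
      intro l m hlm
      ext x y
      have := hextract σ0 τ hτ l m x y
      rw [hlm, mul_one, mul_one] at this
      rw [Matrix.sum_apply]
      exact this
    have key2 : ∑ c, (Gm c i - Gm c j) * (Gm c i - Gm c j)ᴴ = 0 := by
      have expand : ∀ c, (Gm c i - Gm c j) * (Gm c i - Gm c j)ᴴ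
          = (Gm c i * (Gm c i)ᴴ - Gm c i * (Gm c j)ᴴ) -
            (Gm c j * (Gm c i)ᴴ - Gm c j * (Gm c j)ᴴ) := by
        intro c
        rw [Matrix.conjTranspose_sub, Matrix.sub_mul, Matrix.mul_sub, Matrix.mul_sub]
      rw [Finset.sum_congr rfl fun c _ => expand c, Finset.sum_sub_distrib,
        Finset.sum_sub_distrib, Finset.sum_sub_distrib,
        S i i e1, S i j e2, S j i e3, S j j e4, sub_self]
    have := aux_all_zero _ key2 c0
    exact sub_eq_zero.mp this
  -- conclude: each conjugated Kraus block is of the form  G ⊗ 1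
  set GG : C → Matrix a a ℂ := fun c => Gm c (Classical.arbitrary b) with hGG
  have hAU : ∀ c, A c = GG c ⊗ₖ U := by
    intro c
    rw [hAF c, hFdec c]
    rw [Finset.sum_congr rfl fun i (_ : i ∈ Finset.univ) =>
      congrArg (· ⊗ₖ Matrix.single i i (1:ℂ)) (hGeq c i (Classical.arbitrary b)),
      ← aux_kronecker_sum, ← aux_one_eq_sum, ← Matrix.mul_kronecker_mul,
      Matrix.one_mul, Matrix.mul_one]
  -- finish
  refine ⟨∑ c, GG c * σA * (GG c)ᴴ, ?_⟩
  rw [emb, emb, key, Matrix.fromBlocks_inj]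
  refine ⟨?_, by simp [hGzero], by simp [hGzero], by simp [hGzero]⟩
  rw [aux_sum_kronecker]
  refine Finset.sum_congr rfl fun c _ => ?_
  rw [hAU c, aux_kronecker_conjTranspose, ← Matrix.mul_kronecker_mul,
    ← Matrix.mul_kronecker_mul]

end
end

section
/- Let Φ be a quantum channel on I = (a × b) ⊕ k and let U ∈ Matrix b b ℂ be unitary. Then B is U-invariant under Φ if and only if Tr_A ∘ 𝒫 ∘ Φ ∘ 𝒫 = 𝒰 ∘ Tr_A ∘ 𝒫 as maps from I×I matrices to b×b matrices, where 𝒰(σ) = U σ U†. -/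
open Matrix Kronecker BigOperators

set_option linter.unusedSectionVars false

section

variable {a b k : Type*} [Fintype a] [Fintype b] [Fintype k]
  [DecidableEq a] [DecidableEq b] [DecidableEq k]

/-- The projection onto the `a × b` summand. -/
noncomputable def Pm : Matrix ((a × b) ⊕ k) ((a × b) ⊕ k) ℂ :=
  Matrix.fromBlocks 1 0 0 0

/-- The partial trace over the `A` subsystem. -/
noncomputable def trA (M : Matrix ((a × b) ⊕ k) ((a × b) ⊕ k) ℂ) :
    Matrix b b ℂ :=
  fun i j => ∑ x : a, M (Sum.inl (x, i)) (Sum.inl (x, j))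

lemma emb_mul (A A' : Matrix a a ℂ) (B B' : Matrix b b ℂ) :
    (emb A B * emb A' B' : Matrix ((a × b) ⊕ k) ((a × b) ⊕ k) ℂ) = emb (A * A') (B * B') := by
  simp only [emb, Matrix.fromBlocks_multiply, Matrix.mul_zero, Matrix.zero_mul, add_zero,
    zero_add, ← Matrix.mul_kronecker_mul, Matrix.mul_zero, add_zero]

lemma emb_conjT (A : Matrix a a ℂ) (B : Matrix b b ℂ) :
    (emb A B : Matrix ((a × b) ⊕ k) ((a × b) ⊕ k) ℂ)ᴴ = emb Aᴴ Bᴴ := by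
  ext r s
  cases r <;> cases s <;>
    simp [emb, Matrix.conjTranspose_apply, Matrix.fromBlocks, star_mul', mul_comm]

lemma Pm_emb : (Pm : Matrix ((a × b) ⊕ k) ((a × b) ⊕ k) ℂ) = emb 1 1 := by
  rw [emb, Pm, Matrix.one_kronecker_one]

lemma emb_add_left (A A' : Matrix a a ℂ) (B : Matrix b b ℂ) :
    (emb (A + A') B : Matrix ((a × b) ⊕ k) ((a × b) ⊕ k) ℂ) = emb A B + emb A' B := by
  ext r s; cases r <;> cases s <;> simp [emb, Matrix.fromBlocks, add_mul]

lemma emb_add_right (A : Matrix a a ℂ) (B B' : Matrix b b ℂ) :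
    (emb A (B + B') : Matrix ((a × b) ⊕ k) ((a × b) ⊕ k) ℂ) = emb A B + emb A B' := by
  ext r s; cases r <;> cases s <;> simp [emb, Matrix.fromBlocks, mul_add]

lemma emb_smul_right (c : ℂ) (A : Matrix a a ℂ) (B : Matrix b b ℂ) :
    (emb A (c • B) : Matrix ((a × b) ⊕ k) ((a × b) ⊕ k) ℂ) = c • emb A B := by
  ext r s; cases r <;> cases s <;> simp [emb, Matrix.fromBlocks, mul_comm, mul_left_comm]

lemma emb_sum_left {ι : Type*} (s : Finset ι) (A : ι → Matrix a a ℂ) (B : Matrix b b ℂ) :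
    (emb (∑ c ∈ s, A c) B : Matrix ((a × b) ⊕ k) ((a × b) ⊕ k) ℂ) = ∑ c ∈ s, emb (A c) B := by
  induction s using Finset.cons_induction with
  | empty =>
    ext r s'; cases r <;> cases s' <;> simp [emb, Matrix.fromBlocks]
  | cons i s hi ih => rw [Finset.sum_cons, Finset.sum_cons, emb_add_left, ih]

lemma trA_emb (A : Matrix a a ℂ) (B : Matrix b b ℂ) :
    trA (emb A B : Matrix ((a × b) ⊕ k) ((a × b) ⊕ k) ℂ) = A.trace • B := by
  ext i j; simp [trA, emb, Matrix.trace, Matrix.diag, Finset.sum_mul]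

lemma emb_apply_inr_left (A : Matrix a a ℂ) (B : Matrix b b ℂ) (s : k) (r : (a × b) ⊕ k) :
    (emb A B : Matrix ((a × b) ⊕ k) ((a × b) ⊕ k) ℂ) (Sum.inr s) r = 0 := by
  cases r <;> simp [emb, Matrix.fromBlocks]

lemma emb_apply_inr_right (A : Matrix a a ℂ) (B : Matrix b b ℂ) (s : k) (r : (a × b) ⊕ k) :
    (emb A B : Matrix ((a × b) ⊕ k) ((a × b) ⊕ k) ℂ) r (Sum.inr s) = 0 := by
  cases r <;> simp [emb, Matrix.fromBlocks]

lemma emb_apply_inl_inl (A : Matrix a a ℂ) (B : Matrix b b ℂ) (x y : a) (i j : b) :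
    (emb A B : Matrix ((a × b) ⊕ k) ((a × b) ⊕ k) ℂ) (Sum.inl (x, i)) (Sum.inl (y, j)) =
      A x y * B i j := rfl

lemma mul_emb_one_apply (M : Matrix ((a × b) ⊕ k) ((a × b) ⊕ k) ℂ) (Y : Matrix b b ℂ)
    (r : (a × b) ⊕ k) (y : a) (j : b) :
    ((M * emb (1 : Matrix a a ℂ) Y : Matrix ((a × b) ⊕ k) ((a × b) ⊕ k) ℂ)) r (Sum.inl (y, j)) =
      ∑ m, M r (Sum.inl (y, m)) * Y m j := by
  rw [Matrix.mul_apply, Fintype.sum_sum_type]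
  have h2 : ∀ s : k, M r (Sum.inr s) * emb (1 : Matrix a a ℂ) Y (Sum.inr s) (Sum.inl (y, j)) = 0 := by
    intro s; rw [emb_apply_inr_left]; ring
  rw [Finset.sum_congr rfl (fun s _ => h2 s), Finset.sum_const, smul_zero, add_zero,
    Fintype.sum_prod_type]
  simp [emb_apply_inl_inl, Matrix.one_apply, ite_mul, mul_ite, Finset.sum_ite_eq, mul_assoc]

lemma mul_emb_one_apply_inr (M : Matrix ((a × b) ⊕ k) ((a × b) ⊕ k) ℂ) (Y : Matrix b b ℂ)
    (r : (a × b) ⊕ k) (s : k) :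
    ((M * emb (1 : Matrix a a ℂ) Y : Matrix ((a × b) ⊕ k) ((a × b) ⊕ k) ℂ)) r (Sum.inr s) = 0 := by
  rw [Matrix.mul_apply]
  apply Finset.sum_eq_zero
  intro q _; rw [emb_apply_inr_right]; ring

lemma emb_one_mul_apply (M : Matrix ((a × b) ⊕ k) ((a × b) ⊕ k) ℂ) (Y : Matrix b b ℂ)
    (x : a) (i : b) (s : (a × b) ⊕ k) :
    ((emb (1 : Matrix a a ℂ) Y * M : Matrix ((a × b) ⊕ k) ((a × b) ⊕ k) ℂ)) (Sum.inl (x, i)) s =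
      ∑ m, Y i m * M (Sum.inl (x, m)) s := by
  rw [Matrix.mul_apply, Fintype.sum_sum_type]
  have h2 : ∀ t : k, emb (1 : Matrix a a ℂ) Y (Sum.inl (x, i)) (Sum.inr t) * M (Sum.inr t) s = 0 := by
    intro t; rw [emb_apply_inr_right]; ring
  rw [Finset.sum_congr rfl (fun t _ => h2 t), Finset.sum_const, smul_zero, add_zero,
    Fintype.sum_prod_type]
  simp [emb_apply_inl_inl, Matrix.one_apply, ite_mul, mul_ite, Finset.sum_ite_eq]

lemma emb_one_mul_apply_inr (M : Matrix ((a × b) ⊕ k) ((a × b) ⊕ k) ℂ) (Y : Matrix b b ℂ)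
    (t : k) (s : (a × b) ⊕ k) :
    ((emb (1 : Matrix a a ℂ) Y * M : Matrix ((a × b) ⊕ k) ((a × b) ⊕ k) ℂ)) (Sum.inr t) s = 0 := by
  rw [Matrix.mul_apply]
  apply Finset.sum_eq_zero
  intro q _; rw [emb_apply_inr_left]; ring

lemma trace_mul_emb_one (M : Matrix ((a × b) ⊕ k) ((a × b) ⊕ k) ℂ) (Y : Matrix b b ℂ) :
    Matrix.trace ((M * emb (1 : Matrix a a ℂ) Y : Matrix ((a × b) ⊕ k) ((a × b) ⊕ k) ℂ)) = Matrix.trace (trA M * Y) := by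
  rw [Matrix.trace]
  rw [Fintype.sum_sum_type]
  have h2 : ∀ s : k, Matrix.diag ((M * emb (1 : Matrix a a ℂ) Y : Matrix ((a × b) ⊕ k) ((a × b) ⊕ k) ℂ)) (Sum.inr s) = 0 := by
    intro s; exact mul_emb_one_apply_inr M Y _ s
  rw [Finset.sum_congr rfl (fun s _ => h2 s), Finset.sum_const, smul_zero, add_zero,
    Fintype.sum_prod_type]
  have h1 : ∀ x : a, ∀ i : b, Matrix.diag ((M * emb (1 : Matrix a a ℂ) Y : Matrix ((a × b) ⊕ k) ((a × b) ⊕ k) ℂ)) (Sum.inl (x, i)) =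
      ∑ m, M (Sum.inl (x, i)) (Sum.inl (x, m)) * Y m i := fun x i => mul_emb_one_apply M Y _ x i
  simp only [h1]
  rw [Matrix.trace]
  simp only [Matrix.diag, Matrix.mul_apply, trA, Finset.sum_mul]
  rw [Finset.sum_comm]
  congr 1; ext i
  rw [Finset.sum_comm]

lemma gram_sum_zero {n m C : Type*} [Fintype n] [Fintype m] [Fintype C]
    (N : C → Matrix n m ℂ) (h : ∑ c, Matrix.trace (N c * (N c)ᴴ) = 0) : ∀ c, N c = 0 := by
  have key : ∀ c, Matrix.trace (N c * (N c)ᴴ) =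
      ((∑ r, ∑ j, Complex.normSq (N c r j) : ℝ) : ℂ) := by
    intro c
    rw [Matrix.trace]
    push_cast
    congr 1; ext r
    rw [Matrix.diag, Matrix.mul_apply]
    congr 1; ext j
    rw [Matrix.conjTranspose_apply]
    rw [show star (N c r j) = (starRingEnd ℂ) (N c r j) from rfl, Complex.mul_conj]
  rw [Finset.sum_congr rfl (fun c _ => key c), ← Complex.ofReal_sum] at h
  rw [Complex.ofReal_eq_zero] at h
  have hnn : ∀ c ∈ (Finset.univ : Finset C),
      0 ≤ ∑ r, ∑ j, Complex.normSq (N c r j) := by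
    intro c _
    exact Finset.sum_nonneg fun r _ => Finset.sum_nonneg fun j _ => Complex.normSq_nonneg _
  intro c
  have hc := (Finset.sum_eq_zero_iff_of_nonneg hnn).1 h c (Finset.mem_univ c)
  ext r j
  have hr : ∀ r ∈ (Finset.univ : Finset n), 0 ≤ ∑ j, Complex.normSq (N c r j) :=
    fun r _ => Finset.sum_nonneg fun j _ => Complex.normSq_nonneg _
  have := (Finset.sum_eq_zero_iff_of_nonneg hr).1 hc r (Finset.mem_univ r)
  have := (Finset.sum_eq_zero_iff_of_nonneg (fun j _ => Complex.normSq_nonneg _)).1 this j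
    (Finset.mem_univ j)
  simpa using Complex.normSq_eq_zero.1 this

lemma trace_faithful {n : Type*} [Fintype n] [DecidableEq n] (A B : Matrix n n ℂ)
    (h : ∀ M : Matrix n n ℂ, Matrix.trace (M * A) = Matrix.trace (M * B)) : A = B := by
  ext r s
  have := h (Matrix.single s r 1)
  simpa [Matrix.trace, Matrix.diag, Matrix.mul_apply, Matrix.single, ite_mul, ite_and,
    Finset.sum_ite_eq, Finset.sum_ite_eq'] using this

lemma trA_add (M N : Matrix ((a × b) ⊕ k) ((a × b) ⊕ k) ℂ) :
    trA (M + N) = trA M + trA N := by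
  ext i j; simp [trA, Finset.sum_add_distrib]

lemma trA_smul (c : ℂ) (M : Matrix ((a × b) ⊕ k) ((a × b) ⊕ k) ℂ) :
    trA (c • M) = c • trA M := by
  ext i j; simp [trA, Finset.mul_sum]

lemma trA_sum {ι : Type*} (s : Finset ι) (f : ι → Matrix ((a × b) ⊕ k) ((a × b) ⊕ k) ℂ) :
    trA (∑ c ∈ s, f c) = ∑ c ∈ s, trA (f c) := by
  ext i j
  simp [trA, Matrix.sum_apply]
  rw [Finset.sum_comm]

lemma Kstruct [Nonempty b] (K : Matrix ((a × b) ⊕ k) ((a × b) ⊕ k) ℂ)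
    (h1 : Pm * K * Pm = K)
    (h2 : ∀ Y : Matrix b b ℂ,
      K * emb (1 : Matrix a a ℂ) Y = emb (1 : Matrix a a ℂ) Y * K) :
    ∃ G : Matrix a a ℂ, K = emb G 1 := by
  obtain ⟨t₀⟩ := ‹Nonempty b›
  have key : ∀ (x y : a) (i j s t : b),
      (if t = j then K (Sum.inl (x, i)) (Sum.inl (y, s)) else 0)
        = (if s = i then K (Sum.inl (x, t)) (Sum.inl (y, j)) else 0) := by
    intro x y i j s t
    have h := congrFun (congrFun (h2 (Matrix.single s t 1)) (Sum.inl (x, i)))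
      (Sum.inl (y, j))
    rw [mul_emb_one_apply, emb_one_mul_apply] at h
    simpa [Matrix.single, ite_and, ite_mul, mul_ite,
      Finset.sum_ite_eq, Finset.sum_ite_eq'] using h
  refine ⟨Matrix.of fun x y => K (Sum.inl (x, t₀)) (Sum.inl (y, t₀)), ?_⟩
  ext r s
  rcases r with ⟨x, i⟩ | u
  · rcases s with ⟨y, j⟩ | u
    · rw [emb_apply_inl_inl]
      by_cases hij : i = j
      · subst hij
        have h := key x y i t₀ i t₀
        rw [if_pos rfl, if_pos rfl] at h
        simpa [Matrix.one_apply] using h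
      · have h := key x y i j j j
        rw [if_pos rfl, if_neg (Ne.symm hij)] at h
        rw [Matrix.one_apply_ne hij, mul_zero]
        exact h
    · rw [emb_apply_inr_right, ← h1]
      have : Pm * K * Pm = (Pm * K) * emb (1 : Matrix a a ℂ) (1 : Matrix b b ℂ) := by
        rw [← Pm_emb]
      rw [this]
      exact mul_emb_one_apply_inr _ _ _ _
  · rw [emb_apply_inr_left, ← h1]
    have : Pm * K * Pm = emb (1 : Matrix a a ℂ) (1 : Matrix b b ℂ) * (K * Pm) := by
      rw [← Pm_emb, Matrix.mul_assoc]
    rw [this]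
    exact emb_one_mul_apply_inr _ _ _ _

/-- For a quantum channel `Φ` on `I = (a × b) ⊕ k` and a
unitary `U` on `b`, subsystem `B` is `U`-invariant under `Φ` iff
`Tr_A ∘ 𝒫 ∘ Φ ∘ 𝒫 = 𝒰 ∘ Tr_A ∘ 𝒫`, where `𝒫(ρ) = PρP` and `𝒰(σ) = U σ Uᴴ`. -/
theorem U_invariant_iff_traceA_compression
    {C : Type*} [Fintype C] [Nonempty a] [Nonempty b] [Nonempty k]
    (Φ : Matrix ((a × b) ⊕ k) ((a × b) ⊕ k) ℂ →
         Matrix ((a × b) ⊕ k) ((a × b) ⊕ k) ℂ)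
    (E : C → Matrix ((a × b) ⊕ k) ((a × b) ⊕ k) ℂ)
    (hΦ : ∀ ρ, Φ ρ = ∑ c, E c * ρ * (E c)ᴴ)
    (hE : ∑ c, (E c)ᴴ * E c = 1)
    (U : Matrix b b ℂ) (hU : U ∈ Matrix.unitaryGroup b ℂ) :
    (∀ (σA : Matrix a a ℂ) (σB : Matrix b b ℂ),
        ∃ τA : Matrix a a ℂ, Φ (emb σA σB) = emb τA (U * σB * Uᴴ)) ↔
    (∀ ρ : Matrix ((a × b) ⊕ k) ((a × b) ⊕ k) ℂ,
        trA (Pm * Φ (Pm * ρ * Pm) * Pm) = U * trA (Pm * ρ * Pm) * Uᴴ) := by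
  have hU1 : Uᴴ * U = 1 := by
    have h := hU.1
    rwa [Matrix.star_eq_conjTranspose] at h
  have hU2 : U * Uᴴ = 1 := by
    have h := hU.2
    rwa [Matrix.star_eq_conjTranspose] at h
  have hPm2 : (Pm : Matrix ((a × b) ⊕ k) ((a × b) ⊕ k) ℂ) * Pm = Pm := by
    rw [Pm_emb, emb_mul, one_mul, one_mul]
  have hPmH : (Pm : Matrix ((a × b) ⊕ k) ((a × b) ⊕ k) ℂ)ᴴ = Pm := by
    rw [Pm_emb, emb_conjT, Matrix.conjTranspose_one, Matrix.conjTranspose_one]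
  have hPembP : ∀ (A : Matrix a a ℂ) (B : Matrix b b ℂ),
      Pm * emb A B * Pm = (emb A B : Matrix ((a × b) ⊕ k) ((a × b) ⊕ k) ℂ) := by
    intro A B
    rw [Pm_emb, emb_mul, emb_mul, one_mul, one_mul, mul_one, mul_one]
  have htp : ∀ ρ, (Φ ρ).trace = ρ.trace := by
    intro ρ
    rw [hΦ, Matrix.trace_sum]
    rw [Finset.sum_congr rfl fun c (_ : c ∈ Finset.univ) =>
      Matrix.trace_mul_cycle (E c) ρ (E c)ᴴ]
    rw [← Matrix.trace_sum]
    have : ∑ c, (E c)ᴴ * E c * ρ = (∑ c, (E c)ᴴ * E c) * ρ := by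
      rw [Finset.sum_mul]
    rw [this, hE, one_mul]
  have hΦadd : ∀ ρ₁ ρ₂, Φ (ρ₁ + ρ₂) = Φ ρ₁ + Φ ρ₂ := by
    intro ρ₁ ρ₂
    simp only [hΦ, Matrix.mul_add, Matrix.add_mul, Finset.sum_add_distrib]
  have hΦsmul : ∀ (c : ℂ) ρ, Φ (c • ρ) = c • Φ ρ := by
    intro c ρ
    simp only [hΦ, Matrix.mul_smul, Matrix.smul_mul, Finset.smul_sum]
  have hΦsum : ∀ (s : Finset a)
      (f : a → Matrix ((a × b) ⊕ k) ((a × b) ⊕ k) ℂ),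
      Φ (∑ i ∈ s, f i) = ∑ i ∈ s, Φ (f i) := by
    intro s f
    simp only [hΦ, Finset.mul_sum, Finset.sum_mul]
    rw [Finset.sum_comm]
  have htrace_emb : ∀ (A : Matrix a a ℂ) (B : Matrix b b ℂ),
      (emb A B : Matrix ((a × b) ⊕ k) ((a × b) ⊕ k) ℂ).trace = A.trace * B.trace := by
    intro A B
    have h1 : (emb A B : Matrix ((a × b) ⊕ k) ((a × b) ⊕ k) ℂ) *
        emb (1 : Matrix a a ℂ) (1 : Matrix b b ℂ) = emb A B := by
      rw [emb_mul, mul_one, mul_one]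
    rw [← h1, trace_mul_emb_one, Matrix.mul_one, trA_emb, Matrix.trace_smul, smul_eq_mul]
  constructor
  · intro H ρ
    have hn : ((Fintype.card b : ℂ)) ≠ 0 := by
      exact_mod_cast Nat.cast_ne_zero.mpr Fintype.card_ne_zero
    have tEq : ∀ (σA : Matrix a a ℂ) (σ : Matrix b b ℂ) (τ : Matrix a a ℂ),
        Φ (emb σA σ) = emb τ (U * σ * Uᴴ) → τ.trace * σ.trace = σA.trace * σ.trace := by
      intro σA σ τ hτ
      have h := htp (emb σA σ)
      rw [hτ, htrace_emb, htrace_emb] at h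
      have hUc : (U * σ * Uᴴ).trace = σ.trace := by
        rw [Matrix.trace_mul_cycle, hU1, one_mul]
      rw [hUc] at h
      exact h
    have F1 : ∀ (σA : Matrix a a ℂ) (σB : Matrix b b ℂ),
        trA (Pm * Φ (emb σA σB) * Pm) = σA.trace • (U * σB * Uᴴ) := by
      intro σA σB
      obtain ⟨τ, hτ⟩ := H σA σB
      obtain ⟨τ₃, hτ₃⟩ := H σA 1
      set c : ℂ := if σB.trace + (Fintype.card b : ℂ) ≠ 0 then 1 else 2 with hc
      have hcn : σB.trace + c * (Fintype.card b : ℂ) ≠ 0 := by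
        by_cases hh : σB.trace + (Fintype.card b : ℂ) ≠ 0
        · rw [hc, if_pos hh, one_mul]; exact hh
        · rw [hc, if_neg hh]
          push_neg at hh
          have h1 : σB.trace = -(Fintype.card b : ℂ) := eq_neg_of_add_eq_zero_left hh
          rw [h1]
          have h2 : -(Fintype.card b : ℂ) + 2 * (Fintype.card b : ℂ)
              = (Fintype.card b : ℂ) := by ring
          rw [h2]; exact hn
      obtain ⟨τ₂, hτ₂⟩ := H σA (σB + c • 1)
      have hτ₃t : τ₃.trace = σA.trace := by
        have h := tEq σA 1 τ₃ hτ₃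
        rw [Matrix.trace_one] at h
        exact mul_right_cancel₀ hn h
      have hτ₂t : τ₂.trace = σA.trace := by
        have h := tEq σA (σB + c • 1) τ₂ hτ₂
        rw [Matrix.trace_add, Matrix.trace_smul, Matrix.trace_one, smul_eq_mul] at h
        exact mul_right_cancel₀ hcn h
      have hsplit : Φ (emb σA (σB + c • 1)) = Φ (emb σA σB) + c • Φ (emb σA 1) := by
        rw [emb_add_right, emb_smul_right, hΦadd, hΦsmul]
      have heq : (emb τ₂ (U * σB * Uᴴ + c • (1 : Matrix b b ℂ))
            : Matrix ((a × b) ⊕ k) ((a × b) ⊕ k) ℂ)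
          = emb τ (U * σB * Uᴴ) + c • emb τ₃ (1 : Matrix b b ℂ) := by
        have hXsplit : U * (σB + c • 1) * Uᴴ
            = U * σB * Uᴴ + c • (1 : Matrix b b ℂ) := by
          rw [Matrix.mul_add, Matrix.add_mul, Matrix.mul_smul, Matrix.smul_mul,
            Matrix.mul_one, hU2]
        have hUone : U * (1 : Matrix b b ℂ) * Uᴴ = 1 := by
          rw [Matrix.mul_one, hU2]
        rw [← hXsplit, ← hτ₂, hsplit, hτ, hτ₃, hUone]
      have htra := congrArg trA heq
      rw [trA_emb, trA_add, trA_smul, trA_emb, trA_emb] at htra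
      rw [smul_add, hτ₂t, hτ₃t, smul_comm σA.trace c (1 : Matrix b b ℂ)] at htra
      rw [hτ, hPembP, trA_emb]
      exact (add_right_cancel htra).symm
    -- decompose Pm * ρ * Pm into elementary pieces
    set Mf : a → a → Matrix b b ℂ :=
      fun x y => Matrix.of fun i j => ρ (Sum.inl (x, i)) (Sum.inl (y, j)) with hMf
    have hdec : Pm * ρ * Pm = ∑ x : a, ∑ y : a,
        emb (Matrix.single x y (1 : ℂ)) (Mf x y) := by
      ext r s
      rw [Matrix.sum_apply]
      rcases r with ⟨x', i⟩ | u
      · rcases s with ⟨y', j⟩ | u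
        · have hL : ((Pm * ρ * Pm : Matrix ((a × b) ⊕ k) ((a × b) ⊕ k) ℂ))
              (Sum.inl (x', i)) (Sum.inl (y', j))
              = ρ (Sum.inl (x', i)) (Sum.inl (y', j)) := by
            rw [Pm_emb, mul_emb_one_apply, Finset.sum_congr rfl fun m (_ : m ∈ Finset.univ) =>
              congrArg (· * (1 : Matrix b b ℂ) m j) (emb_one_mul_apply ρ 1 x' i (Sum.inl (y', m)))]
            simp [Matrix.one_apply, ite_mul, mul_ite, Finset.sum_ite_eq, Finset.sum_ite_eq']
          rw [hL]
          rw [Finset.sum_congr rfl fun x (_ : x ∈ Finset.univ) =>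
            Matrix.sum_apply (Sum.inl (x', i)) (Sum.inl (y', j)) Finset.univ _]
          simp [emb_apply_inl_inl, Matrix.single, ite_and, ite_mul,
            Finset.sum_ite_eq, Finset.sum_ite_eq', hMf]
        · have hL : ((Pm * ρ * Pm : Matrix ((a × b) ⊕ k) ((a × b) ⊕ k) ℂ))
              (Sum.inl (x', i)) (Sum.inr u) = 0 := by
            rw [Pm_emb, mul_emb_one_apply_inr]
          rw [hL]
          symm
          refine Finset.sum_eq_zero fun x _ => ?_
          rw [Matrix.sum_apply]
          exact Finset.sum_eq_zero fun y _ => emb_apply_inr_right _ _ _ _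
      · have hL : ((Pm * ρ * Pm : Matrix ((a × b) ⊕ k) ((a × b) ⊕ k) ℂ)) (Sum.inr u) s = 0 := by
          rw [Pm_emb, Matrix.mul_assoc, emb_one_mul_apply_inr]
        rw [hL]
        symm
        refine Finset.sum_eq_zero fun x _ => ?_
        rw [Matrix.sum_apply]
        exact Finset.sum_eq_zero fun y _ => emb_apply_inr_left _ _ _ _
    have hcollapse : ∀ (g : a → Matrix b b ℂ) (x : a),
        (∑ y : a, (Matrix.single x y (1 : ℂ)).trace • g y) = g x := by
      intro g x
      rw [Finset.sum_eq_single x]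
      · rw [Matrix.trace_single_eq_same, one_smul]
      · intro y _ hyx
        rw [Matrix.trace_single_eq_of_ne x y 1 hyx.symm, zero_smul]
      · intro hx; exact absurd (Finset.mem_univ x) hx
    have htrAdec : trA (Pm * ρ * Pm) = ∑ x : a, Mf x x := by
      rw [hdec, trA_sum]
      refine Finset.sum_congr rfl fun x _ => ?_
      rw [trA_sum, Finset.sum_congr rfl fun y (_ : y ∈ Finset.univ) =>
        trA_emb (Matrix.single x y (1 : ℂ)) (Mf x y), hcollapse]
    calc trA (Pm * Φ (Pm * ρ * Pm) * Pm)
        = ∑ x : a, ∑ y : a,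
            trA (Pm * Φ (emb (Matrix.single x y (1 : ℂ)) (Mf x y)) * Pm) := by
          rw [hdec, hΦsum, Finset.mul_sum, Finset.sum_mul, trA_sum]
          refine Finset.sum_congr rfl fun x _ => ?_
          rw [hΦsum, Finset.mul_sum, Finset.sum_mul, trA_sum]
      _ = ∑ x : a, ∑ y : a,
            (Matrix.single x y (1 : ℂ)).trace • (U * Mf x y * Uᴴ) := by
          exact Finset.sum_congr rfl fun x _ => Finset.sum_congr rfl fun y _ => F1 _ _
      _ = ∑ x : a, U * Mf x x * Uᴴ := by
          exact Finset.sum_congr rfl fun x _ => hcollapse (fun y => U * Mf x y * Uᴴ) x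
      _ = U * trA (Pm * ρ * Pm) * Uᴴ := by
          rw [htrAdec, Finset.mul_sum, Finset.sum_mul]
  · intro Hc σA σB
    -- a convenient cyclic-trace helper
    have step : ∀ (M X : Matrix ((a × b) ⊕ k) ((a × b) ⊕ k) ℂ),
        (M * (Pm * X * Pm)).trace = ((Pm * M * Pm) * X).trace := by
      intro M X
      rw [Matrix.trace_mul_comm, Matrix.mul_assoc (Pm * X) Pm M, Matrix.trace_mul_comm,
        ← Matrix.mul_assoc (Pm * M) Pm X]
    -- Step 1: trace of the compression of Φ Pm
    have hPP1 : Pm * (1 : Matrix ((a × b) ⊕ k) ((a × b) ⊕ k) ℂ) * Pm = Pm := by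
      rw [Matrix.mul_one, hPm2]
    have h0 := Hc 1
    rw [hPP1] at h0
    have htrPmtrA : ∀ M : Matrix ((a × b) ⊕ k) ((a × b) ⊕ k) ℂ,
        (M * Pm).trace = (trA M).trace := by
      intro M
      rw [Pm_emb, trace_mul_emb_one, Matrix.mul_one]
    have htr1 : (Φ Pm * Pm).trace = (Pm : Matrix ((a × b) ⊕ k) ((a × b) ⊕ k) ℂ).trace := by
      have e1 : ((Pm * Φ Pm * Pm) * Pm).trace = (Φ Pm * Pm).trace := by
        rw [Matrix.mul_assoc (Pm * Φ Pm) Pm Pm, hPm2, Matrix.mul_assoc Pm (Φ Pm) Pm,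
          Matrix.trace_mul_comm Pm (Φ Pm * Pm), Matrix.mul_assoc (Φ Pm) Pm Pm, hPm2]
      rw [← e1, htrPmtrA, h0]
      rw [Matrix.trace_mul_cycle, hU1, one_mul]
      rw [← htrPmtrA Pm, hPm2]
    -- Step 2: E c * Pm is supported on the block
    have hEP : ∀ c : C, Pm * (E c * Pm) = E c * Pm := by
      have h1m2 : ((1 : Matrix ((a × b) ⊕ k) ((a × b) ⊕ k) ℂ) - Pm) *
          ((1 : Matrix ((a × b) ⊕ k) ((a × b) ⊕ k) ℂ) - Pm) = 1 - Pm := by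
        rw [Matrix.sub_mul, Matrix.mul_sub, Matrix.mul_sub, Matrix.one_mul, Matrix.one_mul,
          Matrix.mul_one, hPm2, sub_self, sub_zero]
      have h1mH : ((1 : Matrix ((a × b) ⊕ k) ((a × b) ⊕ k) ℂ) - Pm)ᴴ = 1 - Pm := by
        rw [Matrix.conjTranspose_sub, Matrix.conjTranspose_one, hPmH]
      have hPmPm : ∀ X : Matrix ((a × b) ⊕ k) ((a × b) ⊕ k) ℂ, Pm * (Pm * X) = Pm * X := by
        intro X; rw [← Matrix.mul_assoc, hPm2]
      set N : C → Matrix ((a × b) ⊕ k) ((a × b) ⊕ k) ℂ :=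
        fun c => (1 - Pm) * (E c * Pm) with hN
      have hNzero : ∀ c, N c = 0 := by
        apply gram_sum_zero
        have hterm : ∀ c, N c * (N c)ᴴ
            = (1 - Pm) * (E c * (Pm * ((E c)ᴴ * (1 - Pm)))) := by
          intro c
          rw [hN]
          simp only [Matrix.conjTranspose_mul, h1mH, hPmH]
          simp only [Matrix.mul_assoc, hPmPm]
        have hsum : ∑ c, N c * (N c)ᴴ = (1 - Pm) * (Φ Pm * (1 - Pm)) := by
          rw [Finset.sum_congr rfl fun c (_ : c ∈ Finset.univ) => hterm c, hΦ,
            Finset.sum_mul, Finset.mul_sum]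
          refine Finset.sum_congr rfl fun c _ => ?_
          simp only [Matrix.mul_assoc]
        rw [← Matrix.trace_sum, hsum]
        rw [Matrix.trace_mul_comm, Matrix.mul_assoc (Φ Pm) (1 - Pm) (1 - Pm), h1m2]
        rw [Matrix.mul_sub, Matrix.mul_one, Matrix.trace_sub, htr1, htp, sub_self]
      intro c
      have h := hNzero c
      rw [hN] at h
      simp only at h
      rw [Matrix.sub_mul, Matrix.one_mul] at h
      exact (sub_eq_zero.mp h).symm
    -- Step 3: the dual identity (★)
    have hstar : ∀ Y : Matrix b b ℂ,
        Pm * (∑ c, (E c)ᴴ * emb (1 : Matrix a a ℂ) Y * E c) * Pm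
          = emb (1 : Matrix a a ℂ) (Uᴴ * Y * U) := by
      intro Y
      apply trace_faithful
      intro M
      have lhs1 : (M * (Pm * (∑ c, (E c)ᴴ * emb (1 : Matrix a a ℂ) Y * E c) * Pm)).trace
          = ((Pm * M * Pm) * (∑ c, (E c)ᴴ * emb (1 : Matrix a a ℂ) Y * E c)).trace :=
        step M _
      have lhs2 : ((Pm * M * Pm) * (∑ c, (E c)ᴴ * emb (1 : Matrix a a ℂ) Y * E c)).trace
          = (Φ (Pm * M * Pm) * emb (1 : Matrix a a ℂ) Y).trace := by
        rw [Finset.mul_sum, Matrix.trace_sum, hΦ, Finset.sum_mul, Matrix.trace_sum]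
        refine Finset.sum_congr rfl fun c _ => ?_
        rw [Matrix.trace_mul_comm, Matrix.mul_assoc ((E c)ᴴ * emb (1 : Matrix a a ℂ) Y) (E c)
          (Pm * M * Pm), Matrix.trace_mul_comm, ← Matrix.mul_assoc (E c * (Pm * M * Pm)) (E c)ᴴ
          (emb (1 : Matrix a a ℂ) Y)]
      have lhs3 : (Φ (Pm * M * Pm) * emb (1 : Matrix a a ℂ) Y).trace
          = ((Pm * Φ (Pm * M * Pm) * Pm) * emb (1 : Matrix a a ℂ) Y).trace := by
        conv_lhs => rw [← hPembP (1 : Matrix a a ℂ) Y, step]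
      have lhs4 : ((Pm * Φ (Pm * M * Pm) * Pm) * emb (1 : Matrix a a ℂ) Y).trace
          = ((U * trA (Pm * M * Pm) * Uᴴ) * Y).trace := by
        rw [trace_mul_emb_one, Hc M]
      have lhs5 : ((U * trA (Pm * M * Pm) * Uᴴ) * Y).trace
          = (trA (Pm * M * Pm) * (Uᴴ * Y * U)).trace := by
        rw [Matrix.mul_assoc (U * trA (Pm * M * Pm)) Uᴴ Y,
          Matrix.trace_mul_cycle U (trA (Pm * M * Pm)) (Uᴴ * Y),
          Matrix.trace_mul_comm]
      have lhs6 : (trA (Pm * M * Pm) * (Uᴴ * Y * U)).trace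
          = (M * emb (1 : Matrix a a ℂ) (Uᴴ * Y * U)).trace := by
        rw [← trace_mul_emb_one, ← step, hPembP]
      rw [lhs1, lhs2, lhs3, lhs4, lhs5, lhs6]
    -- Step 4: the commutant operators K c
    set K : C → Matrix ((a × b) ⊕ k) ((a × b) ⊕ k) ℂ :=
      fun c => emb (1 : Matrix a a ℂ) Uᴴ * E c * Pm with hK
    have hPmUH : Pm * emb (1 : Matrix a a ℂ) Uᴴ
        = (emb (1 : Matrix a a ℂ) Uᴴ : Matrix ((a × b) ⊕ k) ((a × b) ⊕ k) ℂ) := by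
      rw [Pm_emb, emb_mul, one_mul, one_mul]
    have hKPmKPm : ∀ c, Pm * K c * Pm = K c := by
      intro c
      rw [hK]
      simp only []
      have h1 : Pm * (emb (1 : Matrix a a ℂ) Uᴴ * E c * Pm) * Pm
          = (Pm * emb (1 : Matrix a a ℂ) Uᴴ) * E c * (Pm * Pm) := by
        simp only [Matrix.mul_assoc]
      rw [h1, hPmUH, hPm2]
    have hKH : ∀ c, (K c)ᴴ = Pm * ((E c)ᴴ * emb (1 : Matrix a a ℂ) U) := by
      intro c
      rw [hK]
      simp only []
      rw [Matrix.conjTranspose_mul, Matrix.conjTranspose_mul, hPmH, emb_conjT,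
        Matrix.conjTranspose_one, Matrix.conjTranspose_conjTranspose]
    have hUUP : ∀ X : Matrix ((a × b) ⊕ k) ((a × b) ⊕ k) ℂ,
        emb (1 : Matrix a a ℂ) U * (emb (1 : Matrix a a ℂ) Uᴴ * X) = Pm * X := by
      intro X
      rw [← Matrix.mul_assoc, emb_mul, one_mul, hU2, ← Pm_emb]
    have hembmul : ∀ (B B' : Matrix b b ℂ) (X : Matrix ((a × b) ⊕ k) ((a × b) ⊕ k) ℂ),
        emb (1 : Matrix a a ℂ) B * (emb (1 : Matrix a a ℂ) B' * X)
          = emb (1 : Matrix a a ℂ) (B * B') * X := by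
      intro B B' X
      rw [← Matrix.mul_assoc, emb_mul, one_mul]
    have hPmPm : ∀ X : Matrix ((a × b) ⊕ k) ((a × b) ⊕ k) ℂ, Pm * (Pm * X) = Pm * X := by
      intro X; rw [← Matrix.mul_assoc, hPm2]
    have hKsum : ∑ c, (K c)ᴴ * K c = Pm := by
      have hterm : ∀ c, (K c)ᴴ * K c = Pm * ((E c)ᴴ * (E c * Pm)) := by
        intro c
        rw [hKH c, hK]
        simp only []
        have h1 : Pm * ((E c)ᴴ * emb (1 : Matrix a a ℂ) U) *
            (emb (1 : Matrix a a ℂ) Uᴴ * E c * Pm)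
            = Pm * ((E c)ᴴ * (emb (1 : Matrix a a ℂ) U *
              (emb (1 : Matrix a a ℂ) Uᴴ * (E c * Pm)))) := by
          simp only [Matrix.mul_assoc]
        rw [h1, hUUP, hEP]
      rw [Finset.sum_congr rfl fun c (_ : c ∈ Finset.univ) => hterm c, ← Finset.mul_sum]
      have h2 : ∑ c, (E c)ᴴ * (E c * Pm) = Pm := by
        have : ∀ c : C, (E c)ᴴ * (E c * Pm) = ((E c)ᴴ * E c) * Pm := by
          intro c; rw [Matrix.mul_assoc]
        rw [Finset.sum_congr rfl fun c (_ : c ∈ Finset.univ) => this c, ← Finset.sum_mul, hE,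
          Matrix.one_mul]
      rw [h2, hPm2]
    have hKY : ∀ Y : Matrix b b ℂ,
        ∑ c, (K c)ᴴ * (emb (1 : Matrix a a ℂ) Y * K c) = emb (1 : Matrix a a ℂ) Y := by
      intro Y
      have hY' : Uᴴ * (U * Y * Uᴴ) * U = Y := by
        rw [Matrix.mul_assoc U Y Uᴴ, ← Matrix.mul_assoc Uᴴ U (Y * Uᴴ), hU1, Matrix.one_mul,
          Matrix.mul_assoc Y Uᴴ U, hU1, Matrix.mul_one]
      have hterm : ∀ c, (K c)ᴴ * (emb (1 : Matrix a a ℂ) Y * K c)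
          = Pm * ((E c)ᴴ * emb (1 : Matrix a a ℂ) (U * Y * Uᴴ) * E c) * Pm := by
        intro c
        rw [hKH c, hK]
        simp only []
        have h1 : Pm * ((E c)ᴴ * emb (1 : Matrix a a ℂ) U) *
            (emb (1 : Matrix a a ℂ) Y * (emb (1 : Matrix a a ℂ) Uᴴ * E c * Pm))
            = Pm * ((E c)ᴴ * (emb (1 : Matrix a a ℂ) U * (emb (1 : Matrix a a ℂ) Y *
              (emb (1 : Matrix a a ℂ) Uᴴ * (E c * Pm))))) := by
          simp only [Matrix.mul_assoc]
        rw [h1, hembmul, hembmul, Matrix.mul_assoc U Y Uᴴ]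
        simp only [Matrix.mul_assoc]
      rw [Finset.sum_congr rfl fun c (_ : c ∈ Finset.univ) => hterm c]
      have h3 : ∑ c, Pm * ((E c)ᴴ * emb (1 : Matrix a a ℂ) (U * Y * Uᴴ) * E c) * Pm
          = Pm * (∑ c, (E c)ᴴ * emb (1 : Matrix a a ℂ) (U * Y * Uᴴ) * E c) * Pm := by
        rw [Finset.mul_sum, Finset.sum_mul]
      rw [h3, hstar (U * Y * Uᴴ), hY']
    -- Step 5: K c commutes with emb 1 Y
    have hcomm : ∀ (c : C) (Y : Matrix b b ℂ),
        K c * emb (1 : Matrix a a ℂ) Y = emb (1 : Matrix a a ℂ) Y * K c := by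
      intro c0 Y
      set X : Matrix ((a × b) ⊕ k) ((a × b) ⊕ k) ℂ := emb (1 : Matrix a a ℂ) Y with hX
      have hXH : Xᴴ = emb (1 : Matrix a a ℂ) Yᴴ := by
        rw [hX, emb_conjT, Matrix.conjTranspose_one]
      have hPmX : Pm * X = X := by rw [hX, Pm_emb, emb_mul, one_mul, one_mul]
      have key : ∑ c, ((K c * X - X * K c)ᴴ * (K c * X - X * K c)) = 0 := by
        have expandG : ∀ Kc : Matrix ((a × b) ⊕ k) ((a × b) ⊕ k) ℂ,
            (Kc * X - X * Kc)ᴴ * (Kc * X - X * Kc)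
            = (Xᴴ * (Kcᴴ * (Kc * X)) - Xᴴ * (Kcᴴ * (X * Kc)))
              - (Kcᴴ * (Xᴴ * (Kc * X)) - Kcᴴ * (Xᴴ * (X * Kc))) := by
          intro Kc
          rw [Matrix.conjTranspose_sub, Matrix.conjTranspose_mul, Matrix.conjTranspose_mul,
            Matrix.sub_mul, Matrix.mul_sub, Matrix.mul_sub]
          simp only [Matrix.mul_assoc]
        rw [Finset.sum_congr rfl fun c (_ : c ∈ Finset.univ) => expandG (K c),
          Finset.sum_sub_distrib, Finset.sum_sub_distrib, Finset.sum_sub_distrib]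
        have s1 : ∑ c, Xᴴ * ((K c)ᴴ * (K c * X)) = Xᴴ * X := by
          rw [← Finset.mul_sum]
          have : ∑ c, (K c)ᴴ * (K c * X) = Pm * X := by
            simp only [← Matrix.mul_assoc]
            rw [← Finset.sum_mul, hKsum]
          rw [this, hPmX]
        have s2 : ∑ c, Xᴴ * ((K c)ᴴ * (X * K c)) = Xᴴ * X := by
          rw [← Finset.mul_sum]
          have h := hKY Y
          rw [← hX] at h
          rw [h]
        have s3 : ∑ c, (K c)ᴴ * (Xᴴ * (K c * X)) = Xᴴ * X := by
          have he : ∀ c, (K c)ᴴ * (Xᴴ * (K c * X)) = ((K c)ᴴ * (Xᴴ * K c)) * X := by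
            intro c; simp only [Matrix.mul_assoc]
          rw [Finset.sum_congr rfl fun c (_ : c ∈ Finset.univ) => he c, ← Finset.sum_mul]
          have h := hKY Yᴴ
          rw [← hXH] at h
          rw [h]
        have s4 : ∑ c, (K c)ᴴ * (Xᴴ * (X * K c)) = Xᴴ * X := by
          have h1 : Xᴴ * X = emb (1 : Matrix a a ℂ) (Yᴴ * Y) := by
            rw [hXH, hX, emb_mul, one_mul]
          have he : ∀ c, (K c)ᴴ * (Xᴴ * (X * K c))
              = (K c)ᴴ * (emb (1 : Matrix a a ℂ) (Yᴴ * Y) * K c) := by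
            intro c; rw [← Matrix.mul_assoc Xᴴ X (K c), h1]
          rw [Finset.sum_congr rfl fun c (_ : c ∈ Finset.univ) => he c, hKY (Yᴴ * Y), ← h1]
        rw [s1, s2, s3, s4, sub_self]
      have htrz : ∑ c, ((K c * X - X * K c) * (K c * X - X * K c)ᴴ).trace = 0 := by
        rw [Finset.sum_congr rfl fun c (_ : c ∈ Finset.univ) =>
          Matrix.trace_mul_comm (K c * X - X * K c) (K c * X - X * K c)ᴴ,
          ← Matrix.trace_sum, key]
        simp
      have h := gram_sum_zero _ htrz c0
      exact sub_eq_zero.mp h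
    -- Step 6: structure of K c and of E c * Pm
    have hKemb : ∀ c, ∃ G : Matrix a a ℂ, K c = emb G 1 :=
      fun c => Kstruct (K c) (hKPmKPm c) (hcomm c)
    choose G hG using hKemb
    have hEPm : ∀ c, E c * Pm = emb (G c) U := by
      intro c
      have h1 : emb (1 : Matrix a a ℂ) U * K c = E c * Pm := by
        rw [hK]
        simp only []
        have h2 : emb (1 : Matrix a a ℂ) U * (emb (1 : Matrix a a ℂ) Uᴴ * E c * Pm)
            = emb (1 : Matrix a a ℂ) U * (emb (1 : Matrix a a ℂ) Uᴴ * (E c * Pm)) := by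
          simp only [Matrix.mul_assoc]
        rw [h2, hUUP, hEP]
      rw [← h1, hG c, emb_mul, mul_one, one_mul]
    -- Step 7: conclusion
    refine ⟨∑ c, G c * σA * (G c)ᴴ, ?_⟩
    rw [hΦ]
    have hterm : ∀ c, E c * emb σA σB * (E c)ᴴ
        = emb (G c * σA * (G c)ᴴ) (U * σB * Uᴴ) := by
      intro c
      have h1 : E c * emb σA σB * (E c)ᴴ
          = (E c * Pm) * emb σA σB * (E c * Pm)ᴴ := by
        rw [Matrix.conjTranspose_mul, hPmH]
        have h2 : E c * Pm * emb σA σB * (Pm * (E c)ᴴ)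
            = E c * (Pm * emb σA σB * Pm) * (E c)ᴴ := by
          simp only [Matrix.mul_assoc]
        rw [h2, hPembP]
      rw [h1, hEPm c, emb_conjT, emb_mul, emb_mul]
    rw [Finset.sum_congr rfl fun c (_ : c ∈ Finset.univ) => hterm c, ← emb_sum_left]

end
end

section
/- Let Φ be a quantum channel on I = (a × b) ⊕ k with Kraus family {E_c}_{c∈C}, and let U ∈ Matrix b b ℂ be unitary. Then B is U-invariant under Φ if and only if the following two conditions hold: (i) there exist scalars λ_{c,x,y} ∈ ℂ such that P_{xx} · (Ũ† E_c) · P_{yy} = λ_{c,x,y} • P_{xy} for all c ∈ C and all x, y ∈ a; and (ii) (Ũ† E_c) · P = P · (Ũ† E_c) · P for all c ∈ C. -/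
open Matrix Kronecker BigOperators

section

variable {a b k : Type*} [Fintype a] [Fintype b] [Fintype k]
  [DecidableEq a] [DecidableEq b] [DecidableEq k]

/-- The matrix units `P_{xy} = emb (e_{xy}, 1^B)`. -/
noncomputable def Pu (x y : a) : Matrix ((a × b) ⊕ k) ((a × b) ⊕ k) ℂ :=
  emb (Matrix.single x y 1) 1

/-- `Ũ`: the `I × I` unitary acting as `1^A ⊗ U` on the `a × b` summand and
as the identity on the `k` summand. -/
noncomputable def Ut (U : Matrix b b ℂ) :
    Matrix ((a × b) ⊕ k) ((a × b) ⊕ k) ℂ :=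
  Matrix.fromBlocks ((1 : Matrix a a ℂ) ⊗ₖ U) 0 0 1

set_option linter.unusedSectionVars false
set_option linter.unusedVariables false
set_option maxHeartbeats 1000000

@[simp] lemma emb_ll (σA : Matrix a a ℂ) (σB : Matrix b b ℂ) (x y : a) (i j : b) :
    emb (k := k) σA σB (Sum.inl (x,i)) (Sum.inl (y,j)) = σA x y * σB i j := rfl
@[simp] lemma emb_lr (σA : Matrix a a ℂ) (σB : Matrix b b ℂ) (p : a × b) (t : k) :
    emb σA σB (Sum.inl p) (Sum.inr t) = 0 := rfl
@[simp] lemma emb_rl (σA : Matrix a a ℂ) (σB : Matrix b b ℂ) (p : a × b) (t : k) :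
    emb σA σB (Sum.inr t) (Sum.inl p) = 0 := rfl
@[simp] lemma emb_rr (σA : Matrix a a ℂ) (σB : Matrix b b ℂ) (t s : k) :
    emb (b := b) σA σB (Sum.inr t) (Sum.inr s) = 0 := rfl

@[simp] lemma Ut_ll (U : Matrix b b ℂ) (x y : a) (i j : b) :
    Ut (k := k) U (Sum.inl (x,i)) (Sum.inl (y,j)) = (if x = y then 1 else 0) * U i j := by
  simp [Ut, Matrix.fromBlocks, Matrix.one_apply]
@[simp] lemma Ut_lr (U : Matrix b b ℂ) (p : a × b) (t : k) :
    Ut U (Sum.inl p) (Sum.inr t) = 0 := rfl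
@[simp] lemma Ut_rl (U : Matrix b b ℂ) (p : a × b) (t : k) :
    Ut U (Sum.inr t) (Sum.inl p) = 0 := rfl
@[simp] lemma Ut_rr (U : Matrix b b ℂ) (t s : k) :
    Ut (a := a) U (Sum.inr t) (Sum.inr s) = if t = s then 1 else 0 := by
  simp [Ut, Matrix.fromBlocks, Matrix.one_apply]

@[simp] lemma Pm_ll (p q : a × b) :
    Pm (k := k) (Sum.inl p) (Sum.inl q) = if p = q then 1 else 0 := by
  simp [Pm, Matrix.fromBlocks, Matrix.one_apply]
@[simp] lemma Pm_lr (p : a × b) (t : k) : Pm (Sum.inl p) (Sum.inr t) = 0 := rfl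
@[simp] lemma Pm_rl (p : a × b) (t : k) : Pm (Sum.inr t) (Sum.inl p) = 0 := rfl
@[simp] lemma Pm_rr (t s : k) : Pm (a := a) (b := b) (Sum.inr t) (Sum.inr s) = 0 := rfl

@[simp] lemma Pu_ll (x y : a) (x' y' : a) (i j : b) :
    Pu (k := k) x y (Sum.inl (x',i)) (Sum.inl (y',j)) =
      (if x = x' ∧ y = y' then 1 else 0) * (if i = j then 1 else 0) := by
  simp [Pu, Matrix.single, Matrix.one_apply]
@[simp] lemma Pu_lr (x y : a) (p : a × b) (t : k) : Pu x y (Sum.inl p) (Sum.inr t) = 0 := rfl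
@[simp] lemma Pu_rl (x y : a) (p : a × b) (t : k) : Pu x y (Sum.inr t) (Sum.inl p) = 0 := rfl
@[simp] lemma Pu_rr (x y : a) (t s : k) : Pu (b := b) x y (Sum.inr t) (Sum.inr s) = 0 := rfl

/-- rank-one matrix `v vᴴ`. -/
noncomputable def outer {ι : Type*} (v : ι → ℂ) : Matrix ι ι ℂ :=
  Matrix.of fun p q => v p * star (v q)

@[simp] lemma outer_apply {ι : Type*} (v : ι → ℂ) (p q : ι) :
    outer v p q = v p * star (v q) := rfl

lemma mul_outer_mul {ι κ : Type*} [Fintype ι] (M : Matrix κ ι ℂ) (v : ι → ℂ) :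
    M * outer v * Mᴴ = outer (M.mulVec v) := by
  ext p q
  simp only [Matrix.mul_apply, outer_apply, Matrix.conjTranspose_apply, Matrix.mulVec,
    dotProduct, Finset.sum_mul, Finset.mul_sum, star_sum, star_mul']
  apply Finset.sum_congr rfl; intro s _
  apply Finset.sum_congr rfl; intro r _
  ring

lemma sum_mul_star_eq_zero {ι : Type*} {s : Finset ι} {f : ι → ℂ}
    (h : ∑ i ∈ s, f i * star (f i) = 0) : ∀ i ∈ s, f i = 0 := by
  have h2 : ∑ i ∈ s, (Complex.normSq (f i) : ℂ) = 0 := by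
    rw [← h]; apply Finset.sum_congr rfl; intro i _
    rw [show star (f i) = (starRingEnd ℂ) (f i) from rfl, Complex.mul_conj (f i)]
  have h3 : ∑ i ∈ s, Complex.normSq (f i) = 0 := by
    have := h2
    rw [← Complex.ofReal_sum] at this
    exact_mod_cast this
  intro i hi
  have h4 := (Finset.sum_eq_zero_iff_of_nonneg
    (fun i _ => Complex.normSq_nonneg (f i))).mp h3 i hi
  exact Complex.normSq_eq_zero.mp h4

lemma sandwich (M : Matrix ((a × b) ⊕ k) ((a × b) ⊕ k) ℂ)
    (σA : Matrix a a ℂ) (σB : Matrix b b ℂ) (p q : (a × b) ⊕ k) :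
    (M * emb (k := k) σA σB * Mᴴ) p q =
      ∑ y' : a, ∑ j' : b, ∑ x' : a, ∑ i' : b,
        M p (Sum.inl (x', i')) * σA x' y' * σB i' j' *
          star (M q (Sum.inl (y', j'))) := by
  simp only [Matrix.mul_apply, Matrix.conjTranspose_apply, Fintype.sum_sum_type,
    Fintype.sum_prod_type, emb_ll, emb_lr, emb_rl, emb_rr, mul_zero, zero_mul,
    Finset.sum_const_zero, add_zero, Finset.sum_mul, Finset.mul_sum]
  apply Finset.sum_congr rfl; intro y' _
  apply Finset.sum_congr rfl; intro j' _
  apply Finset.sum_congr rfl; intro x' _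
  apply Finset.sum_congr rfl; intro i' _
  ring

/-- Backward direction, at the level of Kraus sums. -/
lemma backward_aux {C : Type*} [Fintype C]
    (E : C → Matrix ((a × b) ⊕ k) ((a × b) ⊕ k) ℂ)
    (U : Matrix b b ℂ) (lam : C → a → a → ℂ)
    (h1 : ∀ (c : C) (x y : a) (i j : b),
      E c (Sum.inl (x,i)) (Sum.inl (y,j)) = lam c x y * U i j)
    (h2 : ∀ (c : C) (t : k) (p : a × b), E c (Sum.inr t) (Sum.inl p) = 0)
    (σA : Matrix a a ℂ) (σB : Matrix b b ℂ) :
    ∑ c, E c * emb σA σB * (E c)ᴴ =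
      emb (Matrix.of fun x y => ∑ c, ∑ y' : a, ∑ x' : a,
          lam c x x' * σA x' y' * star (lam c y y')) (U * σB * Uᴴ) := by
  ext p q
  rw [Matrix.sum_apply]
  have hB : ∀ i j : b, (U * σB * Uᴴ) i j =
      ∑ j' : b, ∑ i' : b, U i i' * σB i' j' * star (U j j') := by
    intro i j
    simp only [Matrix.mul_apply, Matrix.conjTranspose_apply, Finset.sum_mul]
  match p, q with
  | Sum.inl (x, i), Sum.inl (y, j) =>
    have L : ∀ c : C, (E c * emb (k := k) σA σB * (E c)ᴴ)
        (Sum.inl (x,i)) (Sum.inl (y,j))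
        = ∑ y' : a, ∑ j' : b, ∑ x' : a, ∑ i' : b,
            lam c x x' * U i i' * σA x' y' * σB i' j' *
              (star (lam c y y') * star (U j j')) := by
      intro c
      rw [sandwich]
      simp only [h1, star_mul']
    simp only [L, emb_ll, Matrix.of_apply]
    conv_rhs => simp only [Finset.sum_mul]
    apply Finset.sum_congr rfl; intro c _
    apply Finset.sum_congr rfl; intro y' _
    rw [Finset.sum_comm]
    apply Finset.sum_congr rfl; intro x' _
    rw [hB, Finset.mul_sum]
    apply Finset.sum_congr rfl; intro j' _
    rw [Finset.mul_sum]
    apply Finset.sum_congr rfl; intro i' _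
    ring
  | Sum.inl p', Sum.inr t =>
    simp only [sandwich, h2, emb_lr, star_zero, mul_zero, Finset.sum_const_zero]
  | Sum.inr t, Sum.inl q' =>
    simp only [sandwich, h2, emb_rl, zero_mul, Finset.sum_const_zero]
  | Sum.inr t, Sum.inr s =>
    simp only [sandwich, h2, emb_rr, zero_mul, Finset.sum_const_zero]

lemma UtH_mul_apply_r (U : Matrix b b ℂ) (M : Matrix ((a × b) ⊕ k) ((a × b) ⊕ k) ℂ)
    (t : k) (q : (a × b) ⊕ k) : ((Ut (a := a) (k := k) U)ᴴ * M) (Sum.inr t) q = M (Sum.inr t) q := by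
  simp [Matrix.mul_apply, Matrix.conjTranspose_apply, Fintype.sum_sum_type]

lemma UtH_mul_apply_l (U : Matrix b b ℂ) (M : Matrix ((a × b) ⊕ k) ((a × b) ⊕ k) ℂ)
    (x : a) (i : b) (q : (a × b) ⊕ k) :
    ((Ut (a := a) (k := k) U)ᴴ * M) (Sum.inl (x,i)) q
      = ∑ i' : b, star (U i' i) * M (Sum.inl (x,i')) q := by
  simp only [Matrix.mul_apply, Matrix.conjTranspose_apply, Fintype.sum_sum_type,
    Fintype.sum_prod_type, Ut_ll, Ut_lr, Ut_rl, Ut_rr, star_zero, zero_mul,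
    Finset.sum_const_zero, add_zero]
  rw [Finset.sum_comm]
  simp [apply_ite (starRingEnd ℂ), ite_mul, Finset.sum_ite_eq, Finset.sum_ite_eq']

lemma Ut_mul_apply_l (U : Matrix b b ℂ) (M : Matrix ((a × b) ⊕ k) ((a × b) ⊕ k) ℂ)
    (x : a) (i : b) (q : (a × b) ⊕ k) :
    ((Ut (a := a) (k := k) U) * M) (Sum.inl (x,i)) q
      = ∑ i' : b, U i i' * M (Sum.inl (x,i')) q := by
  simp only [Matrix.mul_apply, Fintype.sum_sum_type, Fintype.sum_prod_type,
    Ut_ll, Ut_lr, Ut_rl, Ut_rr, zero_mul, Finset.sum_const_zero, add_zero,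
    mul_ite, mul_zero, mul_one, ite_mul, zero_mul, one_mul]
  rw [Finset.sum_comm]
  simp

lemma mul_Pm_l (M : Matrix ((a × b) ⊕ k) ((a × b) ⊕ k) ℂ) (p : (a × b) ⊕ k) (q : a × b) :
    (M * Pm (a := a) (b := b) (k := k)) p (Sum.inl q) = M p (Sum.inl q) := by
  simp [Matrix.mul_apply, Fintype.sum_sum_type, Finset.sum_ite_eq, Finset.sum_ite_eq']

lemma mul_Pm_r (M : Matrix ((a × b) ⊕ k) ((a × b) ⊕ k) ℂ) (p : (a × b) ⊕ k) (t : k) :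
    (M * Pm (a := a) (b := b) (k := k)) p (Sum.inr t) = 0 := by
  simp [Matrix.mul_apply, Fintype.sum_sum_type]

lemma Pm_mul_l (M : Matrix ((a × b) ⊕ k) ((a × b) ⊕ k) ℂ) (p : a × b) (q : (a × b) ⊕ k) :
    (Pm (a := a) (b := b) (k := k) * M) (Sum.inl p) q = M (Sum.inl p) q := by
  simp [Matrix.mul_apply, Fintype.sum_sum_type, Finset.sum_ite_eq, Finset.sum_ite_eq']

lemma Pm_mul_r (M : Matrix ((a × b) ⊕ k) ((a × b) ⊕ k) ℂ) (t : k) (q : (a × b) ⊕ k) :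
    (Pm (a := a) (b := b) (k := k) * M) (Sum.inr t) q = 0 := by
  simp [Matrix.mul_apply, Fintype.sum_sum_type]

lemma Pu_mul_l (x y : a) (M : Matrix ((a × b) ⊕ k) ((a × b) ⊕ k) ℂ)
    (x' : a) (i : b) (q : (a × b) ⊕ k) :
    (Pu (b := b) (k := k) x y * M) (Sum.inl (x',i)) q = if x = x' then M (Sum.inl (y,i)) q else 0 := by
  simp only [Matrix.mul_apply, Fintype.sum_sum_type, Fintype.sum_prod_type,
    Pu_ll, Pu_lr, Pu_rl, Pu_rr, zero_mul, Finset.sum_const_zero, add_zero,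
    ite_mul, one_mul, mul_ite, mul_zero, mul_one]
  by_cases hx : x = x'
  · simp [hx, Finset.sum_ite_eq, Finset.sum_ite_eq']
  · simp [hx]

lemma Pu_mul_r (x y : a) (M : Matrix ((a × b) ⊕ k) ((a × b) ⊕ k) ℂ)
    (t : k) (q : (a × b) ⊕ k) :
    (Pu (b := b) (k := k) x y * M) (Sum.inr t) q = 0 := by
  simp [Matrix.mul_apply, Fintype.sum_sum_type]

lemma mul_Pu_l (x y : a) (M : Matrix ((a × b) ⊕ k) ((a × b) ⊕ k) ℂ)
    (p : (a × b) ⊕ k) (y' : a) (j : b) :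
    (M * Pu (b := b) (k := k) x y) p (Sum.inl (y',j)) = if y = y' then M p (Sum.inl (x,j)) else 0 := by
  simp only [Matrix.mul_apply, Fintype.sum_sum_type, Fintype.sum_prod_type,
    Pu_ll, Pu_lr, Pu_rl, Pu_rr, mul_zero, Finset.sum_const_zero, add_zero,
    mul_ite, mul_one, mul_zero, ite_mul]
  by_cases hy : y = y'
  · simp [hy, Finset.sum_ite_eq, Finset.sum_ite_eq']
  · simp [hy]

lemma mul_Pu_r (x y : a) (M : Matrix ((a × b) ⊕ k) ((a × b) ⊕ k) ℂ)
    (p : (a × b) ⊕ k) (t : k) :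
    (M * Pu (b := b) (k := k) x y) p (Sum.inr t) = 0 := by
  simp [Matrix.mul_apply, Fintype.sum_sum_type]

lemma cond2_iff (U : Matrix b b ℂ) (M : Matrix ((a × b) ⊕ k) ((a × b) ⊕ k) ℂ) :
    ((Ut (a := a) (k := k) U)ᴴ * M) * Pm = Pm * ((Ut (a := a) (k := k) U)ᴴ * M) * Pm ↔
      ∀ (t : k) (p : a × b), M (Sum.inr t) (Sum.inl p) = 0 := by
  constructor
  · intro h t p
    have h1 := congrFun (congrFun h (Sum.inr t)) (Sum.inl p)
    rw [mul_Pm_l, UtH_mul_apply_r, Matrix.mul_assoc, Pm_mul_r] at h1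
    exact h1
  · intro h
    ext p q
    match p, q with
    | Sum.inl p', Sum.inl q' =>
      rw [mul_Pm_l, Matrix.mul_assoc, Pm_mul_l, mul_Pm_l]
    | Sum.inl p', Sum.inr t =>
      rw [mul_Pm_r, Matrix.mul_assoc, Pm_mul_l, mul_Pm_r]
    | Sum.inr t, Sum.inl q' =>
      rw [mul_Pm_l, UtH_mul_apply_r, Matrix.mul_assoc, Pm_mul_r, h]
    | Sum.inr t, Sum.inr s =>
      rw [mul_Pm_r, Matrix.mul_assoc, Pm_mul_r]

lemma kron_one_conjT (U : Matrix b b ℂ) :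
    ((1 : Matrix a a ℂ) ⊗ₖ U)ᴴ = (1 : Matrix a a ℂ) ⊗ₖ Uᴴ := by
  ext ⟨x,i⟩ ⟨y,j⟩
  by_cases hxy : x = y <;>
    simp [Matrix.conjTranspose_apply, Matrix.one_apply, hxy, Ne.symm,
      apply_ite (starRingEnd ℂ)]

lemma Ut_mul_UtH (U : Matrix b b ℂ) (hUU : U * Uᴴ = 1) :
    Ut (a := a) (k := k) U * (Ut U)ᴴ = 1 := by
  rw [Ut, Matrix.fromBlocks_conjTranspose, Matrix.fromBlocks_multiply]
  simp only [kron_one_conjT, Matrix.mul_zero, Matrix.zero_mul, Matrix.mul_one,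
    add_zero, zero_add, Matrix.conjTranspose_zero, Matrix.conjTranspose_one]
  rw [← Matrix.mul_kronecker_mul, Matrix.one_mul, hUU, Matrix.one_kronecker_one,
    Matrix.fromBlocks_one]

lemma cond1_iff (U : Matrix b b ℂ) (hU1 : Uᴴ * U = 1) (hU2 : U * Uᴴ = 1)
    (M : Matrix ((a × b) ⊕ k) ((a × b) ⊕ k) ℂ) (lam : a → a → ℂ) :
    (∀ x y : a, Pu x x * ((Ut (a := a) (k := k) U)ᴴ * M) * Pu y y = lam x y • Pu x y) ↔
    (∀ (x y : a) (i j : b), M (Sum.inl (x,i)) (Sum.inl (y,j)) = lam x y * U i j) := by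
  have hUe : ∀ i j : b, ∑ i' : b, star (U i' i) * U i' j = if i = j then 1 else 0 := by
    intro i j
    have h0 := congrFun (congrFun hU1 i) j
    simpa [Matrix.mul_apply, Matrix.conjTranspose_apply, Matrix.one_apply] using h0
  constructor
  · intro h x y i j
    have hF : ∀ i j : b, ((Ut (a := a) (k := k) U)ᴴ * M) (Sum.inl (x,i)) (Sum.inl (y,j))
        = if i = j then lam x y else 0 := by
      intro i j
      have h1 := congrFun (congrFun (h x y) (Sum.inl (x,i))) (Sum.inl (y,j))
      rw [mul_Pu_l, if_pos rfl, Pu_mul_l, if_pos rfl] at h1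
      rw [h1]
      simp [Matrix.smul_apply, mul_comm]
    have hM : M (Sum.inl (x,i)) (Sum.inl (y,j))
        = (Ut (a := a) (k := k) U * ((Ut (a := a) (k := k) U)ᴴ * M)) (Sum.inl (x,i)) (Sum.inl (y,j)) := by
      rw [← Matrix.mul_assoc, Ut_mul_UtH U hU2, Matrix.one_mul]
    rw [hM, Ut_mul_apply_l]
    simp [hF, mul_ite, Finset.sum_ite_eq, Finset.sum_ite_eq', mul_comm]
  · intro h x y
    have hF : ∀ (x y : a) (i j : b),
        ((Ut (a := a) (k := k) U)ᴴ * M) (Sum.inl (x,i)) (Sum.inl (y,j))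
        = if i = j then lam x y else 0 := by
      intro x y i j
      rw [UtH_mul_apply_l]
      simp only [h, ← mul_assoc]
      rw [show (∑ i' : b, star (U i' i) * lam x y * U i' j)
          = lam x y * ∑ i' : b, star (U i' i) * U i' j from by
        rw [Finset.mul_sum]; exact Finset.sum_congr rfl fun i' _ => by ring]
      rw [hUe]
      by_cases hij : i = j <;> simp [hij]
    ext p q
    match p, q with
    | Sum.inl (x',i), Sum.inl (y',j) =>
      rw [mul_Pu_l, Matrix.smul_apply, Pu_ll]
      by_cases hy : y = y'
      · rw [if_pos hy, Pu_mul_l]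
        by_cases hx : x = x'
        · rw [if_pos hx]
          subst hx; subst hy
          rw [hF]
          by_cases hij : i = j <;> simp [hij]
        · rw [if_neg hx]
          simp [hx]
      · rw [if_neg hy]
        simp [hy]
    | Sum.inl p', Sum.inr t =>
      rw [mul_Pu_r, Matrix.smul_apply, Pu_lr, smul_zero]
    | Sum.inr t, Sum.inl q' =>
      rw [Matrix.mul_assoc, Pu_mul_r, Matrix.smul_apply, Pu_rl, smul_zero]
    | Sum.inr t, Sum.inr s =>
      rw [Matrix.mul_assoc, Pu_mul_r, Matrix.smul_apply, Pu_rr, smul_zero]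

/-- the embedded basis-block vector `x ⊗ ψ`. -/
noncomputable def vvec (x : a) (ψ : b → ℂ) : ((a × b) ⊕ k) → ℂ :=
  Sum.elim (fun p => if p.1 = x then ψ p.2 else 0) 0

@[simp] lemma vvec_l (x : a) (ψ : b → ℂ) (x' : a) (i : b) :
    vvec (k := k) x ψ (Sum.inl (x', i)) = if x' = x then ψ i else 0 := rfl
@[simp] lemma vvec_r (x : a) (ψ : b → ℂ) (t : k) : vvec x ψ (Sum.inr t) = 0 := rfl

lemma emb_one_outer (ψ : b → ℂ) :
    emb (k := k) (1 : Matrix a a ℂ) (outer ψ) = ∑ x : a, outer (vvec x ψ) := by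
  ext p q
  rw [Matrix.sum_apply]
  match p, q with
  | Sum.inl (x, i), Sum.inl (y, j) =>
    simp only [emb_ll, outer_apply, vvec_l, Matrix.one_apply]
    by_cases hxy : x = y
    · subst hxy
      simp [apply_ite (starRingEnd ℂ), ite_mul, mul_ite, Finset.sum_ite_eq,
        Finset.sum_ite_eq']
    · rw [if_neg hxy]
      rw [eq_comm, Finset.sum_eq_zero]
      · ring
      · intro x' _
        by_cases hx : x = x' <;> by_cases hy : y = x' <;>
          simp [hx, hy, apply_ite (starRingEnd ℂ)]
        exact absurd (hx.trans hy.symm) hxy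
  | Sum.inl p', Sum.inr t => simp
  | Sum.inr t, Sum.inl q' => simp
  | Sum.inr t, Sum.inr s => simp

lemma quad_outer_sum {ι J : Type*} [Fintype ι] [Fintype J] (u : J → ι → ℂ) (w : ι → ℂ) :
    ∑ p, star (w p) * ((∑ j, outer (u j)).mulVec w) p
      = ∑ j, (∑ p, star (w p) * u j p) * star (∑ p, star (w p) * u j p) := by
  have h1 : ∀ p, ((∑ j, outer (u j)).mulVec w) p
      = ∑ j, (u j p * ∑ q, star (u j q) * w q) := by
    intro p
    simp only [Matrix.mulVec, dotProduct, Matrix.sum_apply, Finset.sum_mul,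
      outer_apply]
    rw [Finset.sum_comm]
    apply Finset.sum_congr rfl; intro j _
    rw [Finset.mul_sum]
    apply Finset.sum_congr rfl; intro q _
    ring
  calc ∑ p, star (w p) * ((∑ j, outer (u j)).mulVec w) p
      = ∑ p, ∑ j, star (w p) * (u j p * ∑ q, star (u j q) * w q) := by
        apply Finset.sum_congr rfl; intro p _
        rw [h1, Finset.mul_sum]
    _ = ∑ j, ∑ p, star (w p) * (u j p * ∑ q, star (u j q) * w q) := Finset.sum_comm
    _ = ∑ j, (∑ p, star (w p) * u j p) * (∑ q, star (u j q) * w q) := by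
        apply Finset.sum_congr rfl; intro j _
        rw [Finset.sum_mul]
        apply Finset.sum_congr rfl; intro p _
        ring
    _ = ∑ j, (∑ p, star (w p) * u j p) * star (∑ p, star (w p) * u j p) := by
        apply Finset.sum_congr rfl; intro j _
        congr 1
        rw [star_sum]
        apply Finset.sum_congr rfl; intro q _
        rw [star_mul', star_star, mul_comm]

lemma emb_outer_mulVec_zero (τA : Matrix a a ℂ) (φ : b → ℂ) (w : ((a × b) ⊕ k) → ℂ)
    (hw : ∀ y : a, ∑ j : b, star (φ j) * w (Sum.inl (y, j)) = 0) :
    (emb (k := k) τA (outer φ)).mulVec w = 0 := by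
  funext p
  match p with
  | Sum.inl (x, i) =>
    simp only [Matrix.mulVec, dotProduct, Fintype.sum_sum_type, Fintype.sum_prod_type,
      emb_ll, emb_lr, outer_apply, mul_zero, zero_mul, Finset.sum_const_zero, add_zero,
      Pi.zero_apply]
    apply Finset.sum_eq_zero; intro y _
    calc ∑ j : b, τA x y * (φ i * star (φ j)) * w (Sum.inl (y, j))
        = (τA x y * φ i) * ∑ j : b, star (φ j) * w (Sum.inl (y, j)) := by
          rw [Finset.mul_sum]; exact Finset.sum_congr rfl fun j _ => by ring
      _ = 0 := by rw [hw y, mul_zero]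
  | Sum.inr t =>
    simp [Matrix.mulVec, dotProduct, Fintype.sum_sum_type]

lemma mulVec_norm (U : Matrix b b ℂ)
    (hUe : ∀ i j : b, ∑ i' : b, star (U i' i) * U i' j = if i = j then 1 else 0)
    (ψ : b → ℂ) :
    ∑ j : b, star (U.mulVec ψ j) * U.mulVec ψ j = ∑ j : b, star (ψ j) * ψ j := by
  simp only [Matrix.mulVec, dotProduct, star_sum, star_mul', Finset.sum_mul,
    Finset.mul_sum]
  rw [Finset.sum_comm]
  calc ∑ y : b, ∑ x : b, ∑ i : b, star (U x i) * star (ψ i) * (U x y * ψ y)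
      = ∑ y : b, ∑ i : b, (∑ x : b, star (U x i) * U x y) * (star (ψ i) * ψ y) := by
        apply Finset.sum_congr rfl; intro y _
        rw [Finset.sum_comm]
        apply Finset.sum_congr rfl; intro i _
        rw [Finset.sum_mul]
        apply Finset.sum_congr rfl; intro x _
        ring
    _ = ∑ j : b, star (ψ j) * ψ j := by
        have hUe' : ∀ i j : b, ∑ i' : b, (starRingEnd ℂ) (U i' i) * U i' j
            = if i = j then 1 else 0 := hUe
        simp [hUe', ite_mul, Finset.sum_ite_eq, Finset.sum_ite_eq']

lemma key_aux {C : Type*} [Fintype C]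
    (E : C → Matrix ((a × b) ⊕ k) ((a × b) ⊕ k) ℂ)
    (U : Matrix b b ℂ) (ψ : b → ℂ) (τA : Matrix a a ℂ)
    (hτ : ∑ c, E c * emb (k := k) 1 (outer ψ) * (E c)ᴴ = emb τA (outer (U.mulVec ψ)))
    (w : ((a × b) ⊕ k) → ℂ)
    (hw : ∀ y : a, ∑ j : b, star (U.mulVec ψ j) * w (Sum.inl (y, j)) = 0)
    (c : C) (x : a) :
    ∑ p, star (w p) * (E c).mulVec (vvec x ψ) p = 0 := by
  have hmat : ∑ c, E c * emb (k := k) 1 (outer ψ) * (E c)ᴴ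
      = ∑ cx : C × a, outer ((E cx.1).mulVec (vvec cx.2 ψ)) := by
    rw [emb_one_outer, Fintype.sum_prod_type]
    apply Finset.sum_congr rfl; intro c _
    rw [Finset.mul_sum, Finset.sum_mul]
    exact Finset.sum_congr rfl fun x _ => mul_outer_mul _ _
  have h0 : ∑ p, star (w p) *
      ((∑ cx : C × a, outer ((E cx.1).mulVec (vvec cx.2 ψ))).mulVec w) p = 0 := by
    rw [← hmat, hτ, emb_outer_mulVec_zero τA (U.mulVec ψ) w hw]
    simp
  rw [quad_outer_sum] at h0
  exact sum_mul_star_eq_zero h0 (c, x) (Finset.mem_univ _)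

lemma mulVec_vvec (M : Matrix ((a × b) ⊕ k) ((a × b) ⊕ k) ℂ) (x : a) (ψ : b → ℂ)
    (p : (a × b) ⊕ k) :
    M.mulVec (vvec x ψ) p = ∑ i' : b, M p (Sum.inl (x, i')) * ψ i' := by
  simp only [Matrix.mulVec, dotProduct, Fintype.sum_sum_type, Fintype.sum_prod_type,
    vvec_l, vvec_r, mul_zero, Finset.sum_const_zero, add_zero, mul_ite]
  rw [Finset.sum_comm]
  simp [Finset.sum_ite_eq, Finset.sum_ite_eq']

lemma appA {C : Type*} [Fintype C]
    (E : C → Matrix ((a × b) ⊕ k) ((a × b) ⊕ k) ℂ) (U : Matrix b b ℂ)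
    (key : ∀ (ψ : b → ℂ) (w : ((a × b) ⊕ k) → ℂ),
      (∀ y : a, ∑ j : b, star (U.mulVec ψ j) * w (Sum.inl (y, j)) = 0) →
      ∀ (c : C) (x : a), ∑ p, star (w p) * (E c).mulVec (vvec x ψ) p = 0)
    (c : C) (t : k) (x : a) (i : b) : E c (Sum.inr t) (Sum.inl (x, i)) = 0 := by
  have h := key (Pi.single i 1) (Sum.elim 0 (Pi.single t 1)) (fun y => by simp) c x
  simp only [Fintype.sum_sum_type, Sum.elim_inl, Sum.elim_inr, Pi.zero_apply, star_zero,
    zero_mul, Finset.sum_const_zero, zero_add, Matrix.mulVec, dotProduct,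
    Fintype.sum_prod_type, vvec_l, vvec_r, Pi.single_apply, mul_ite, ite_mul, mul_zero,
    zero_add, mul_one, mul_zero, apply_ite (starRingEnd ℂ), _root_.map_zero, _root_.map_one,
    one_mul, Finset.sum_ite_eq, Finset.sum_ite_eq', Finset.mem_univ, if_true] at h
  simpa using h

lemma appB1 {C : Type*} [Fintype C]
    (E : C → Matrix ((a × b) ⊕ k) ((a × b) ⊕ k) ℂ) (U : Matrix b b ℂ)
    (hUe : ∀ i j : b, ∑ i' : b, star (U i' i) * U i' j = if i = j then 1 else 0)
    (key : ∀ (ψ : b → ℂ) (w : ((a × b) ⊕ k) → ℂ),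
      (∀ y : a, ∑ j : b, star (U.mulVec ψ j) * w (Sum.inl (y, j)) = 0) →
      ∀ (c : C) (x : a), ∑ p, star (w p) * (E c).mulVec (vvec x ψ) p = 0)
    (c : C) (x y : a) (ψ : b → ℂ) (hψ : (∑ j : b, star (ψ j) * ψ j) ≠ 0) :
    ∃ μ : ℂ, ∀ j : b,
      (∑ i' : b, E c (Sum.inl (y, j)) (Sum.inl (x, i')) * ψ i') = μ * U.mulVec ψ j := by
  set φ : b → ℂ := U.mulVec ψ with hφdef
  set g : b → ℂ := fun j => ∑ i' : b, E c (Sum.inl (y, j)) (Sum.inl (x, i')) * ψ i' with hgdef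
  set d : ℂ := ∑ j : b, star (ψ j) * ψ j with hddef
  set μ : ℂ := (∑ j : b, star (φ j) * g j) / d with hμdef
  refine ⟨μ, ?_⟩
  set ξ : b → ℂ := fun j => g j - μ * φ j with hξdef
  have hφφ : ∑ j : b, star (φ j) * φ j = d := mulVec_norm U hUe ψ
  have hμd : μ * d = ∑ j : b, star (φ j) * g j := div_mul_cancel₀ _ hψ
  have hξφ : ∑ j : b, star (φ j) * ξ j = 0 := by
    have : ∀ j : b, star (φ j) * ξ j = star (φ j) * g j - μ * (star (φ j) * φ j) := by
      intro j; simp only [hξdef]; ring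
    rw [Finset.sum_congr rfl fun j _ => this j, Finset.sum_sub_distrib, ← Finset.mul_sum,
      hφφ, hμd, sub_self]
  have hw : ∀ y' : a, ∑ j : b, star (φ j) * (vvec (k := k) y ξ) (Sum.inl (y', j)) = 0 := by
    intro y'
    by_cases hy : y' = y
    · subst hy; simpa using hξφ
    · simp [hy]
  have h := key ψ (vvec y ξ) hw c x
  have hg0 : ∑ j : b, star (ξ j) * g j = 0 := by
    rw [← h]
    simp only [Fintype.sum_sum_type, Fintype.sum_prod_type, vvec_l, vvec_r, star_zero,
      zero_mul, Finset.sum_const_zero, add_zero]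
    rw [Finset.sum_comm]
    apply Finset.sum_congr rfl; intro j _
    rw [Finset.sum_eq_single y]
    · rw [if_pos rfl, mulVec_vvec]
    · intro x1 _ hx1
      simp [hx1]
    · intro hy
      exact absurd (Finset.mem_univ y) hy
  have hξφ2 : ∑ j : b, star (ξ j) * φ j = 0 := by
    have h2 := congrArg star hξφ
    rw [star_sum] at h2
    simpa [star_mul', star_star, mul_comm] using h2
  have hξξ : ∑ j : b, ξ j * star (ξ j) = 0 := by
    have e : ∀ j : b, ξ j * star (ξ j) = star (ξ j) * g j - μ * (star (ξ j) * φ j) := by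
      intro j; simp only [hξdef]; ring
    rw [Finset.sum_congr rfl fun j _ => e j, Finset.sum_sub_distrib, hg0, ← Finset.mul_sum,
      hξφ2, mul_zero, sub_self]
  intro j
  have h0 := sum_mul_star_eq_zero hξξ j (Finset.mem_univ j)
  have h1 : g j - μ * φ j = 0 := by simpa [hξdef] using h0
  have := sub_eq_zero.mp h1
  simpa [hgdef] using this

lemma appB2 {C : Type*} [Fintype C] [Nonempty b]
    (E : C → Matrix ((a × b) ⊕ k) ((a × b) ⊕ k) ℂ) (U : Matrix b b ℂ)
    (hUe : ∀ i j : b, ∑ i' : b, star (U i' i) * U i' j = if i = j then 1 else 0)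
    (key : ∀ (ψ : b → ℂ) (w : ((a × b) ⊕ k) → ℂ),
      (∀ y : a, ∑ j : b, star (U.mulVec ψ j) * w (Sum.inl (y, j)) = 0) →
      ∀ (c : C) (x : a), ∑ p, star (w p) * (E c).mulVec (vvec x ψ) p = 0)
    (c : C) (x y : a) :
    ∃ l : ℂ, ∀ (i j : b), E c (Sum.inl (y, j)) (Sum.inl (x, i)) = l * U j i := by
  have hcol : ∀ i : b, ∃ μ : ℂ, ∀ j : b,
      E c (Sum.inl (y, j)) (Sum.inl (x, i)) = μ * U j i := by
    intro i
    have hs : (∑ j : b, star ((Pi.single i 1 : b → ℂ) j) * (Pi.single i 1 : b → ℂ) j) ≠ 0 := by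
      simp [Pi.single_apply, apply_ite (starRingEnd ℂ), ite_mul, Finset.sum_ite_eq]
    obtain ⟨μ, hμ⟩ := appB1 E U hUe key c x y (Pi.single i 1) hs
    refine ⟨μ, fun j => ?_⟩
    have h1 := hμ j
    simpa [Pi.single_apply, mul_ite, Finset.sum_ite_eq, Finset.sum_ite_eq',
      Matrix.mulVec, dotProduct] using h1
  choose μf hμf using hcol
  have i0 : b := Classical.arbitrary b
  refine ⟨μf (Classical.arbitrary b), fun i j => ?_⟩
  set i₀ : b := Classical.arbitrary b with hi0
  rcases eq_or_ne i i₀ with hi | hi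
  · rw [hμf i j, hi]
  · set ψ : b → ℂ := fun j' => (if j' = i then 1 else 0) + (if j' = i₀ then 1 else 0)
      with hψdef
    have hψn : (∑ j : b, star (ψ j) * ψ j) ≠ 0 := by
      have h2 : ∑ j : b, star (ψ j) * ψ j = 2 := by
        simp [hψdef, apply_ite (starRingEnd ℂ), add_mul, mul_add,
          Finset.sum_add_distrib, ite_mul, mul_ite, Finset.sum_ite_eq,
          Finset.sum_ite_eq', hi, hi.symm]
        norm_num
      rw [h2]; norm_num
    obtain ⟨ν, hν⟩ := appB1 E U hUe key c x y ψ hψn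
    have hL : ∀ j : b, (∑ i' : b, E c (Sum.inl (y, j)) (Sum.inl (x, i')) * ψ i')
        = μf i * U j i + μf i₀ * U j i₀ := by
      intro j
      simp only [hψdef, mul_add, Finset.sum_add_distrib, mul_ite, mul_one, mul_zero,
        Finset.sum_ite_eq, Finset.sum_ite_eq', Finset.mem_univ, if_true]
      rw [hμf i j, hμf i₀ j]
    have hR : ∀ j : b, U.mulVec ψ j = U j i + U j i₀ := by
      intro j
      simp [Matrix.mulVec, dotProduct, hψdef, mul_add, Finset.sum_add_distrib,
        mul_ite, mul_one, mul_zero, Finset.sum_ite_eq, Finset.sum_ite_eq']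
    have hq : ∀ j : b, μf i * U j i + μf i₀ * U j i₀ = ν * U j i + ν * U j i₀ := by
      intro j
      have h3 := hν j
      rw [hL, hR, mul_add] at h3
      exact h3
    have expand1 : ∀ α β : ℂ, ∑ j : b, star (U j i) * (α * U j i + β * U j i₀) = α := by
      intro α β
      have e : ∀ j : b, star (U j i) * (α * U j i + β * U j i₀)
          = α * (star (U j i) * U j i) + β * (star (U j i) * U j i₀) := fun j => by ring
      rw [Finset.sum_congr rfl fun j _ => e j, Finset.sum_add_distrib, ← Finset.mul_sum,
        ← Finset.mul_sum, hUe i i, hUe i i₀, if_pos rfl, if_neg hi, mul_one, mul_zero,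
        add_zero]
    have expand2 : ∀ α β : ℂ, ∑ j : b, star (U j i₀) * (α * U j i + β * U j i₀) = β := by
      intro α β
      have e : ∀ j : b, star (U j i₀) * (α * U j i + β * U j i₀)
          = α * (star (U j i₀) * U j i) + β * (star (U j i₀) * U j i₀) := fun j => by ring
      rw [Finset.sum_congr rfl fun j _ => e j, Finset.sum_add_distrib, ← Finset.mul_sum,
        ← Finset.mul_sum, hUe i₀ i, hUe i₀ i₀, if_pos rfl, if_neg (Ne.symm hi), mul_zero,
        mul_one, zero_add]
    have e1 : μf i = ν := by
      have h4 : ∑ j : b, star (U j i) * (μf i * U j i + μf i₀ * U j i₀)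
          = ∑ j : b, star (U j i) * (ν * U j i + ν * U j i₀) :=
        Finset.sum_congr rfl fun j _ => by rw [hq j]
      rw [expand1, expand1] at h4
      exact h4
    have e0 : μf i₀ = ν := by
      have h4 : ∑ j : b, star (U j i₀) * (μf i * U j i + μf i₀ * U j i₀)
          = ∑ j : b, star (U j i₀) * (ν * U j i + ν * U j i₀) :=
        Finset.sum_congr rfl fun j _ => by rw [hq j]
      rw [expand2, expand2] at h4
      exact h4
    rw [hμf i j, e1, e0]

/-- For a quantum channel `Φ` on `I = (a × b) ⊕ k` with Kraus
family `{E c}` and a unitary `U` on `b`, subsystem `B` is `U`-invariant under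
`Φ` iff (i) `P_{xx} (Ũᴴ E_c) P_{yy} = λ_{c,x,y} • P_{xy}` for some scalars
`λ_{c,x,y}` and (ii) `(Ũᴴ E_c) P = P (Ũᴴ E_c) P` for all `c`. -/
theorem U_invariant_iff_kraus_conditions
    {C : Type*} [Fintype C] [Nonempty a] [Nonempty b] [Nonempty k]
    (Φ : Matrix ((a × b) ⊕ k) ((a × b) ⊕ k) ℂ →
         Matrix ((a × b) ⊕ k) ((a × b) ⊕ k) ℂ)
    (E : C → Matrix ((a × b) ⊕ k) ((a × b) ⊕ k) ℂ)
    (hΦ : ∀ ρ, Φ ρ = ∑ c, E c * ρ * (E c)ᴴ)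
    (hE : ∑ c, (E c)ᴴ * E c = 1)
    (U : Matrix b b ℂ) (hU : U ∈ Matrix.unitaryGroup b ℂ) :
    (∀ (σA : Matrix a a ℂ) (σB : Matrix b b ℂ),
        ∃ τA : Matrix a a ℂ, Φ (emb σA σB) = emb τA (U * σB * Uᴴ)) ↔
    ((∃ lam : C → a → a → ℂ, ∀ (c : C) (x y : a),
        Pu x x * ((Ut U)ᴴ * E c) * Pu y y = lam c x y • Pu x y) ∧
      (∀ c : C, ((Ut U)ᴴ * E c) * Pm = Pm * ((Ut U)ᴴ * E c) * Pm)) := by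
  have hUmem := Unitary.mem_iff.mp hU
  have hU1 : Uᴴ * U = 1 := by
    have := hUmem.1
    rwa [Matrix.star_eq_conjTranspose] at this
  have hU2 : U * Uᴴ = 1 := by
    have := hUmem.2
    rwa [Matrix.star_eq_conjTranspose] at this
  have hUe : ∀ i j : b, ∑ i' : b, star (U i' i) * U i' j = if i = j then 1 else 0 := by
    intro i j
    have h0 := congrFun (congrFun hU1 i) j
    simpa [Matrix.mul_apply, Matrix.conjTranspose_apply, Matrix.one_apply] using h0
  constructor
  · intro H
    have key : ∀ (ψ : b → ℂ) (w : ((a × b) ⊕ k) → ℂ),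
        (∀ y : a, ∑ j : b, star (U.mulVec ψ j) * w (Sum.inl (y, j)) = 0) →
        ∀ (c : C) (x : a), ∑ p, star (w p) * (E c).mulVec (vvec x ψ) p = 0 := by
      intro ψ w hw c x
      obtain ⟨τA, hτ⟩ := H 1 (outer ψ)
      rw [hΦ, mul_outer_mul U ψ] at hτ
      exact key_aux E U ψ τA hτ w hw c x
    have h2 : ∀ (c : C) (t : k) (p : a × b), E c (Sum.inr t) (Sum.inl p) = 0 := by
      intro c t p
      rcases p with ⟨x, i⟩
      exact appA E U key c t x i
    have h1 : ∀ (c : C) (x y : a), ∃ l : ℂ, ∀ (i j : b),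
        E c (Sum.inl (x, i)) (Sum.inl (y, j)) = l * U i j := by
      intro c x y
      obtain ⟨l, hl⟩ := appB2 E U hUe key c y x
      exact ⟨l, fun i j => hl j i⟩
    choose lam hlam using fun c x y => h1 c x y
    refine ⟨⟨lam, fun c x y => ?_⟩, fun c => ?_⟩
    · exact (cond1_iff U hU1 hU2 (E c) (lam c)).mpr (fun x y i j => hlam c x y i j) x y
    · exact (cond2_iff U (E c)).mpr (h2 c)
  · rintro ⟨⟨lam, hPu⟩, hPm⟩
    intro σA σB
    have h1 : ∀ (c : C) (x y : a) (i j : b),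
        E c (Sum.inl (x, i)) (Sum.inl (y, j)) = lam c x y * U i j :=
      fun c => (cond1_iff U hU1 hU2 (E c) (lam c)).mp (hPu c)
    have h2 : ∀ (c : C) (t : k) (p : a × b), E c (Sum.inr t) (Sum.inl p) = 0 :=
      fun c => (cond2_iff U (E c)).mp (hPm c)
    refine ⟨Matrix.of fun x y => ∑ c, ∑ y' : a, ∑ x' : a,
        lam c x x' * σA x' y' * star (lam c y y'), ?_⟩
    rw [hΦ]
    exact backward_aux E U lam h1 h2 σA σB


end
end
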